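/- arXiv:1912.03653 — 2 statements merged into one kernel-verified Lean document; each statement's English description precedes it below -/
import Mathlib

section
/- A divisor d on a weighted multigraph G of genus g is a break divisor if and only if deg d = g and for every nonempty subset Y of vertices, Σ_{v∈Y} d_v ≥ g(Y), where g(Y) is the genus of the induced subgraph on Y. (In particular every break divisor has degree g.) -/
open Finset

variable {V E : Type} [Fintype V] [Fintype E] [DecidableEq V] [DecidableEq E]

/-- Edges with both endpoints in `Y`. -/
def edgesIn (ends : E → V × V) (Y : Finset V) : Finset E :=
  univ.filter fun e => (ends e).1 ∈ Y ∧ (ends e).2 ∈ Y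

/-- Edges with exactly one endpoint in `Y` (the cut `δ(Y)`). -/
def cutEdges (ends : E → V × V) (Y : Finset V) : Finset E :=
  univ.filter fun e => Xor ((ends e).1 ∈ Y) ((ends e).2 ∈ Y)

/-- Arithmetic genus of the subgraph induced on `Y` with the edges of `S` removed:
`g(Y \ S) = |E(Y) \ S| - |Y| + 1 + Σ_{v ∈ Y} w v`. -/
def genusOf (ends : E → V × V) (w : V → ℕ) (Y : Finset V) (S : Finset E) : ℤ :=
  ((edgesIn ends Y) \ S).card - Y.card + 1 + ∑ v ∈ Y, (w v : ℤ)

/-- The right-hand side of the basic inequality for the pair `(S, d)`, the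
polarization `h`, and the proper subcurve `Y`:
`g(Y \ S) - 1 + (h(Y)/H)(deg d + |S| + 1 - g) + |δ(Y) \ S|`. -/
def basicBound (ends : E → V × V) (w : V → ℕ) (h : V → ℤ) (S : Finset E) (d : V → ℤ)
    (Y : Finset V) : ℚ :=
  (genusOf ends w Y S : ℚ) - 1
    + ((∑ v ∈ Y, (h v : ℚ)) / (∑ v, (h v : ℚ)))
        * ((∑ v, (d v : ℚ)) + S.card + 1 - (genusOf ends w univ ∅ : ℚ))
    + ((cutEdges ends Y) \ S).card

/-- The pair `(S, d)` is semistable with respect to the polarization `h`. -/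
def Semistable (ends : E → V × V) (w : V → ℕ) (h : V → ℤ) (S : Finset E) (d : V → ℤ) : Prop :=
  ∀ Y : Finset V, Y.Nonempty → Y ≠ univ →
    (∑ v ∈ Y, (d v : ℚ)) ≤ basicBound ends w h S d Y

/-- The pair `(S, d)` is stable with respect to the polarization `h`. -/
def Stable (ends : E → V × V) (w : V → ℕ) (h : V → ℤ) (S : Finset E) (d : V → ℤ) : Prop :=
  ∀ Y : Finset V, Y.Nonempty → Y ≠ univ →
    (∑ v ∈ Y, (d v : ℚ)) < basicBound ends w h S d Y

/-- The simple graph on the vertices of `G` in which two distinct vertices are adjacent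
if some edge of the multigraph lying in `E₀` joins them. -/
def spanGraph (ends : E → V × V) (E₀ : Finset E) : SimpleGraph V where
  Adj u v := u ≠ v ∧ ∃ e ∈ E₀, ends e = (u, v) ∨ ends e = (v, u)
  symm := ⟨by
    rintro a b ⟨hne, e, he, hor⟩
    exact ⟨hne.symm, e, he, hor.symm⟩⟩
  loopless := ⟨by rintro a ⟨hne, -⟩; exact hne rfl⟩

/-- The underlying simple graph of the multigraph `G - S` obtained by deleting the
edges in `S`. -/
def graphMinus (ends : E → V × V) (S : Finset E) : SimpleGraph V :=
  spanGraph ends (univ \ S)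

/-- `T` is (the edge set of) a spanning tree of the connected multigraph `G`. -/
def IsSpanningTree (ends : E → V × V) (T : Finset E) : Prop :=
  (spanGraph ends T).Connected ∧ T.card + 1 = Fintype.card V

/-- `d` is a break divisor on the weighted multigraph `G`: there is a spanning tree `T`
and an assignment `φ` of an endpoint to each non-tree edge such that
`d = Σ_v g_v · v + Σ_{e ∉ T} φ(e)`. -/
def IsBreakDivisor (ends : E → V × V) (w : V → ℕ) (d : V → ℤ) : Prop :=
  ∃ T : Finset E, IsSpanningTree ends T ∧
    ∃ φ : E → V, (∀ e ∈ univ \ T, φ e = (ends e).1 ∨ φ e = (ends e).2) ∧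
      ∀ v, d v = (w v : ℤ) + ((univ \ T).filter fun e => φ e = v).card

/-- The simple graph induced on the vertex subset `Y`, using the edges of the multigraph
not lying in `S` with both endpoints in `Y`. -/
def inducedSG (ends : E → V × V) (Y : Finset V) (S : Finset E) :
    SimpleGraph {v : V // v ∈ Y} where
  Adj a b := a ≠ b ∧ ∃ e, e ∉ S ∧ (ends e = (a.1, b.1) ∨ ends e = (b.1, a.1))
  symm := ⟨by
    rintro a b ⟨hne, e, he, hor⟩
    exact ⟨hne.symm, e, he, hor.symm⟩⟩
  loopless := ⟨by rintro a ⟨hne, -⟩; exact hne rfl⟩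

/-- The number of connected components of the subgraph induced on `Y` minus `S`. -/
noncomputable def numComp (ends : E → V × V) (Y : Finset V) (S : Finset E) : ℕ :=
  Nat.card (inducedSG ends Y S).ConnectedComponent

/-- The (geometric, component-wise) genus of the subgraph induced on `Y`:
`g(Y) = b₁(G[Y]) + Σ_{v ∈ Y} g_v` where `b₁ = |E(Y)| - |Y| + #components`. -/
noncomputable def genusB1 (ends : E → V × V) (w : V → ℕ) (Y : Finset V) : ℤ :=
  (edgesIn ends Y).card - Y.card + numComp ends Y ∅ + ∑ v ∈ Y, (w v : ℤ)

set_option linter.unusedSectionVars false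
set_option maxHeartbeats 1000000

section AuxA
variable (ends : E → V × V)

lemma mem_edgesIn {Y : Finset V} {e : E} :
    e ∈ edgesIn ends Y ↔ (ends e).1 ∈ Y ∧ (ends e).2 ∈ Y := by
  simp [edgesIn]

lemma edgesIn_univ : edgesIn ends univ = univ := by
  ext e; simp [edgesIn]

lemma edgesIn_mono {Y Z : Finset V} (h : Y ⊆ Z) : edgesIn ends Y ⊆ edgesIn ends Z := by
  intro e he
  rw [mem_edgesIn] at he ⊢
  exact ⟨h he.1, h he.2⟩

lemma reach_eq_of_isolated {F : Finset E} {x : V}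
    (hx : ∀ e ∈ F, (ends e).1 ≠ x ∧ (ends e).2 ≠ x) {y : V}
    (h : (spanGraph ends F).Reachable x y) : x = y := by
  obtain ⟨p⟩ := h
  cases p with
  | nil => rfl
  | cons h' p' =>
    obtain ⟨hne, e, he, hor⟩ := h'
    rcases hor with h1 | h1
    · exact absurd (congrArg Prod.fst h1) (hx e he).1
    · exact absurd (congrArg Prod.snd h1) (hx e he).2

lemma reach_insert_cases {F : Finset E} {a : E} {x y : V}
    (h : (spanGraph ends (insert a F)).Reachable x y) :
    (spanGraph ends F).Reachable x y ∨
      ((spanGraph ends F).Reachable x (ends a).1 ∧ (spanGraph ends F).Reachable (ends a).2 y) ∨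
      ((spanGraph ends F).Reachable x (ends a).2 ∧ (spanGraph ends F).Reachable (ends a).1 y) := by
  obtain ⟨p⟩ := h
  induction p with
  | nil => exact Or.inl (SimpleGraph.Reachable.refl _)
  | @cons x z y hadj p ih =>
    obtain ⟨hne, e, he, hor⟩ := hadj
    have key : (spanGraph ends F).Reachable x z ∨
        (x = (ends a).1 ∧ z = (ends a).2) ∨ (x = (ends a).2 ∧ z = (ends a).1) := by
      rcases Finset.mem_insert.mp he with rfl | heF
      · rcases hor with h1 | h1
        · exact Or.inr (Or.inl ⟨(congrArg Prod.fst h1).symm, (congrArg Prod.snd h1).symm⟩)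
        · exact Or.inr (Or.inr ⟨(congrArg Prod.snd h1).symm, (congrArg Prod.fst h1).symm⟩)
      · exact Or.inl (SimpleGraph.Adj.reachable ⟨hne, e, heF, hor⟩)
    rcases key with hxz | ⟨hxu, hzv⟩ | ⟨hxv, hzu⟩
    · rcases ih with h2 | ⟨h2, h3⟩ | ⟨h2, h3⟩
      · exact Or.inl (hxz.trans h2)
      · exact Or.inr (Or.inl ⟨hxz.trans h2, h3⟩)
      · exact Or.inr (Or.inr ⟨hxz.trans h2, h3⟩)
    · subst hxu; subst hzv
      rcases ih with h2 | ⟨h2, h3⟩ | ⟨h2, h3⟩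
      · exact Or.inr (Or.inl ⟨SimpleGraph.Reachable.refl _, h2⟩)
      · exact Or.inl (h2.symm.trans h3)
      · exact Or.inl h3
    · subst hxv; subst hzu
      rcases ih with h2 | ⟨h2, h3⟩ | ⟨h2, h3⟩
      · exact Or.inr (Or.inr ⟨SimpleGraph.Reachable.refl _, h2⟩)
      · exact Or.inl h3
      · exact Or.inr (Or.inr ⟨SimpleGraph.Reachable.refl _, h3⟩)
end AuxA

section AuxB
variable (ends : E → V × V)

lemma ncomp_insert (a : E) (F : Finset E) :
    Nat.card (spanGraph ends F).ConnectedComponent ≤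
      Nat.card (spanGraph ends (insert a F)).ConnectedComponent + 1 := by
  classical
  letI : Fintype (spanGraph ends F).ConnectedComponent := Fintype.ofFinite _
  letI : Fintype (spanGraph ends (insert a F)).ConnectedComponent := Fintype.ofFinite _
  have hle : spanGraph ends F ≤ spanGraph ends (insert a F) := by
    intro x y hxy
    obtain ⟨hne, e, he, hor⟩ := hxy
    exact ⟨hne, e, Finset.mem_insert_of_mem he, hor⟩
  set G := spanGraph ends F with hG
  set G' := spanGraph ends (insert a F) with hG'
  set ψ : G.ConnectedComponent → G'.ConnectedComponent :=
    SimpleGraph.ConnectedComponent.map (SimpleGraph.Hom.ofLE hle) with hψ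
  have hψmk : ∀ x : V, ψ (G.connectedComponentMk x) = G'.connectedComponentMk x := by
    intro x
    rw [hψ, SimpleGraph.ConnectedComponent.map_mk]
    rfl
  have hinj : Set.InjOn ψ ((univ.erase (G.connectedComponentMk (ends a).1)) : Finset _) := by
    intro c₁ h₁ c₂ h₂ heq
    simp only [Finset.coe_erase, Set.mem_diff, Set.mem_singleton_iff, Finset.coe_univ,
      Set.mem_univ, true_and] at h₁ h₂
    obtain ⟨x, rfl⟩ := c₁.exists_rep
    obtain ⟨y, rfl⟩ := c₂.exists_rep
    have hxy : G'.Reachable x y := by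
      have h5 : G'.connectedComponentMk x = G'.connectedComponentMk y :=
        (hψmk x).symm.trans (heq.trans (hψmk y))
      exact SimpleGraph.ConnectedComponent.exact h5
    rcases reach_insert_cases ends hxy with h | ⟨h3, h4⟩ | ⟨h3, h4⟩
    · exact SimpleGraph.ConnectedComponent.sound h
    · exact absurd (SimpleGraph.ConnectedComponent.sound h3) h₁
    · exact absurd (SimpleGraph.ConnectedComponent.sound h4.symm) h₂
  have hcard := Finset.card_le_card_of_injOn ψ (fun c _ => Finset.mem_univ (ψ c)) hinj
  rw [Finset.card_erase_of_mem (Finset.mem_univ _), Finset.card_univ, Finset.card_univ] at hcard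
  have e1 : Nat.card G.ConnectedComponent = Fintype.card G.ConnectedComponent :=
    Nat.card_eq_fintype_card
  have e2 : Nat.card G'.ConnectedComponent = Fintype.card G'.ConnectedComponent :=
    Nat.card_eq_fintype_card
  omega

lemma ncomp_union (F D : Finset E) :
    Nat.card (spanGraph ends F).ConnectedComponent ≤
      Nat.card (spanGraph ends (F ∪ D)).ConnectedComponent + D.card := by
  classical
  induction D using Finset.induction_on with
  | empty => simp
  | @insert a D ha ih =>
    rw [Finset.union_insert, Finset.card_insert_of_notMem ha]
    calc Nat.card (spanGraph ends F).ConnectedComponent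
        ≤ Nat.card (spanGraph ends (F ∪ D)).ConnectedComponent + D.card := ih
      _ ≤ (Nat.card (spanGraph ends (insert a (F ∪ D))).ConnectedComponent + 1) + D.card :=
          Nat.add_le_add_right (ncomp_insert ends a (F ∪ D)) D.card
      _ = Nat.card (spanGraph ends (insert a (F ∪ D))).ConnectedComponent + (D.card + 1) := by ring

lemma ncomp_empty :
    Nat.card (spanGraph ends (∅ : Finset E)).ConnectedComponent = Fintype.card V := by
  have hbij : Function.Bijective ((spanGraph ends (∅ : Finset E)).connectedComponentMk) := by
    constructor
    · intro x y h
      exact reach_eq_of_isolated ends (by simp) (SimpleGraph.ConnectedComponent.exact h)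
    · exact fun c => c.exists_rep
  rw [← Nat.card_eq_fintype_card]
  exact (Nat.card_eq_of_bijective _ hbij).symm

lemma ncomp_conn {F : Finset E} (h : (spanGraph ends F).Connected) :
    Nat.card (spanGraph ends F).ConnectedComponent = 1 := by
  rw [Nat.card_eq_one_iff_unique]
  constructor
  · constructor
    intro c₁ c₂
    obtain ⟨x, rfl⟩ := c₁.exists_rep
    obtain ⟨y, rfl⟩ := c₂.exists_rep
    exact SimpleGraph.ConnectedComponent.sound (h.preconnected x y)
  · have : Nonempty V := h.nonempty
    exact ⟨(spanGraph ends F).connectedComponentMk this.some⟩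

lemma tree_forest_bound {T : Finset E} (hT : IsSpanningTree ends T)
    {Y : Finset V} (hY : Y.Nonempty) :
    (T ∩ edgesIn ends Y).card + 1 ≤ Y.card := by
  classical
  set T' := T ∩ edgesIn ends Y with hT'
  have hsub : T' ⊆ T := Finset.inter_subset_left
  have h1 : Nat.card (spanGraph ends T').ConnectedComponent ≤ 1 + (T \ T').card := by
    have h := ncomp_union ends T' (T \ T')
    rw [Finset.union_sdiff_of_subset hsub, ncomp_conn ends hT.1] at h
    omega
  obtain ⟨y₀, hy₀⟩ := hY
  letI : Fintype (spanGraph ends T').ConnectedComponent := Fintype.ofFinite _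
  set κ := (spanGraph ends T').connectedComponentMk with hκ
  have hiso : ∀ x, x ∉ Y → ∀ z, (spanGraph ends T').Reachable x z → x = z := by
    intro x hx z hr
    refine reach_eq_of_isolated ends ?_ hr
    intro e he
    have hmem := (mem_edgesIn ends).mp (Finset.mem_inter.mp he).2
    exact ⟨fun h => hx (h ▸ hmem.1), fun h => hx (h ▸ hmem.2)⟩
  have hinj : Set.InjOn κ ((insert y₀ (univ \ Y)) : Finset V) := by
    intro x hx y hy hxy
    simp only [Finset.coe_insert, Set.mem_insert_iff, Finset.mem_coe, Finset.mem_sdiff,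
      Finset.mem_univ, true_and] at hx hy
    have hr : (spanGraph ends T').Reachable x y := SimpleGraph.ConnectedComponent.exact hxy
    rcases hx with rfl | hx
    · rcases hy with rfl | hy
      · rfl
      · exact (hiso y hy x hr.symm).symm
    · exact hiso x hx y hr
  have hcard1 : (insert y₀ (univ \ Y)).card ≤ Fintype.card ((spanGraph ends T').ConnectedComponent) := by
    rw [← Finset.card_univ]
    exact Finset.card_le_card_of_injOn κ (fun x _ => Finset.mem_univ _) hinj
  rw [Finset.card_insert_of_notMem (by simp [hy₀]), Finset.card_sdiff_of_subset (Finset.subset_univ Y),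
    Finset.card_univ] at hcard1
  have h2 : (T \ T').card + T'.card = T.card := Finset.card_sdiff_add_card_eq_card hsub
  have h3 := hT.2
  have h4 : Y.card ≤ Fintype.card V := by
    rw [← Finset.card_univ]; exact Finset.card_le_card (Finset.subset_univ Y)
  rw [Nat.card_eq_fintype_card] at h1
  omega
end AuxB

section AuxC
variable (ends : E → V × V)

lemma numComp_pos {Y : Finset V} (hY : Y.Nonempty) : 0 < numComp ends Y ∅ := by
  obtain ⟨y, hy⟩ := hY
  have : Nonempty (inducedSG ends Y (∅ : Finset E)).ConnectedComponent :=
    ⟨(inducedSG ends Y ∅).connectedComponentMk ⟨y, hy⟩⟩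
  exact Nat.card_pos

lemma genus_forms (w : V → ℕ) (d : V → ℤ) :
    (∀ Y : Finset V, Y.Nonempty → genusB1 ends w Y ≤ ∑ v ∈ Y, d v) ↔
      (∀ Y : Finset V, Y.Nonempty →
        ((edgesIn ends Y).card : ℤ) - Y.card + 1 + ∑ v ∈ Y, (w v : ℤ) ≤ ∑ v ∈ Y, d v) := by
  constructor
  · intro h Y hY
    have h1 := h Y hY
    have hpos := numComp_pos ends hY
    unfold genusB1 at h1
    have : (1 : ℤ) ≤ (numComp ends Y ∅ : ℤ) := by exact_mod_cast hpos
    linarith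
  · intro h Y hY
    classical
    obtain ⟨y₀, hy₀⟩ := hY
    letI : Fintype (inducedSG ends Y (∅ : Finset E)).ConnectedComponent := Fintype.ofFinite _
    set κ : {v : V // v ∈ Y} → (inducedSG ends Y (∅ : Finset E)).ConnectedComponent :=
      (inducedSG ends Y ∅).connectedComponentMk with hκ
    set P : (inducedSG ends Y (∅ : Finset E)).ConnectedComponent → Finset V :=
      fun c => (Y.attach.filter fun v => κ v = c).image Subtype.val with hP
    have memP : ∀ (x : V) c, x ∈ P c ↔ ∃ h : x ∈ Y, κ ⟨x, h⟩ = c := by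
      intro x c
      rw [hP]
      simp only [Finset.mem_image, Finset.mem_filter, Finset.mem_attach, true_and, Subtype.exists]
      constructor
      · rintro ⟨a, ha, hc, rfl⟩
        exact ⟨ha, hc⟩
      · rintro ⟨hx, hc⟩
        exact ⟨x, hx, hc, rfl⟩
    have hPne : ∀ c, (P c).Nonempty := by
      intro c
      obtain ⟨⟨x, hx⟩, hrep⟩ := c.exists_rep
      exact ⟨x, (memP x c).mpr ⟨hx, hrep⟩⟩
    -- vertex sums decompose
    have hsumfib : ∀ f : V → ℤ, ∑ c, ∑ v ∈ P c, f v = ∑ v ∈ Y, f v := by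
      intro f
      have h1 : ∀ c, ∑ v ∈ P c, f v = ∑ v ∈ Y.attach.filter (fun v => κ v = c), f v.val := by
        intro c
        rw [hP]
        exact Finset.sum_image (fun a _ b _ h => Subtype.val_injective h)
      calc ∑ c, ∑ v ∈ P c, f v
          = ∑ c, ∑ v ∈ Y.attach.filter (fun v => κ v = c), f v.val :=
            Finset.sum_congr rfl fun c _ => h1 c
        _ = ∑ v ∈ Y.attach, f v.val :=
            Finset.sum_fiberwise_of_maps_to (fun v _ => Finset.mem_univ (κ v)) _
        _ = ∑ v ∈ Y, f v := Finset.sum_attach Y f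
    -- cardinality decomposition
    have hcardfib : ∑ c, (P c).card = Y.card := by
      have h1 : ∀ c, (P c).card = (Y.attach.filter (fun v => κ v = c)).card := by
        intro c
        rw [hP]
        exact Finset.card_image_of_injective _ Subtype.val_injective
      calc ∑ c, (P c).card
          = ∑ c, (Y.attach.filter (fun v => κ v = c)).card :=
            Finset.sum_congr rfl fun c _ => h1 c
        _ = Y.attach.card :=
            (Finset.card_eq_sum_card_fiberwise (fun v _ => Finset.mem_univ (κ v))).symm
        _ = Y.card := Finset.card_attach
    -- edge decomposition
    set ge : E → (inducedSG ends Y (∅ : Finset E)).ConnectedComponent := fun e =>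
      if h : (ends e).1 ∈ Y then κ ⟨(ends e).1, h⟩ else κ ⟨y₀, hy₀⟩ with hge
    have hedge : ∀ c, edgesIn ends (P c) = (edgesIn ends Y).filter fun e => ge e = c := by
      intro c
      ext e
      simp only [Finset.mem_filter, mem_edgesIn]
      constructor
      · rintro ⟨h1, h2⟩
        obtain ⟨hy1, hc1⟩ := (memP _ c).mp h1
        obtain ⟨hy2, hc2⟩ := (memP _ c).mp h2
        refine ⟨⟨hy1, hy2⟩, ?_⟩
        rw [hge]
        simp only
        rw [dif_pos hy1]
        exact hc1
      · rintro ⟨⟨hy1, hy2⟩, hc⟩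
        rw [hge] at hc
        simp only at hc
        rw [dif_pos hy1] at hc
        refine ⟨(memP _ c).mpr ⟨hy1, hc⟩, (memP _ c).mpr ⟨hy2, ?_⟩⟩
        by_cases heq : (⟨(ends e).1, hy1⟩ : {v : V // v ∈ Y}) = ⟨(ends e).2, hy2⟩
        · rw [← heq]
          exact hc
        · have hadj : (inducedSG ends Y (∅ : Finset E)).Adj ⟨(ends e).1, hy1⟩ ⟨(ends e).2, hy2⟩ :=
            ⟨heq, e, Finset.notMem_empty e, Or.inl rfl⟩
          have := SimpleGraph.ConnectedComponent.connectedComponentMk_eq_of_adj hadj.symm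
          rw [hκ]
          exact this.trans hc
    have hedgecard : ∑ c, (edgesIn ends (P c)).card = (edgesIn ends Y).card := by
      calc ∑ c, (edgesIn ends (P c)).card
          = ∑ c, ((edgesIn ends Y).filter fun e => ge e = c).card :=
            Finset.sum_congr rfl fun c _ => by rw [hedge]
        _ = (edgesIn ends Y).card :=
            (Finset.card_eq_sum_card_fiberwise (fun e _ => Finset.mem_univ (ge e))).symm
    -- apply hypothesis on each component and sum
    have key : ∀ c, ((edgesIn ends (P c)).card : ℤ) - (P c).card + 1 + ∑ v ∈ P c, (w v : ℤ)
        ≤ ∑ v ∈ P c, d v := fun c => h (P c) (hPne c)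
    have hsumkey := Finset.sum_le_sum (fun c (_ : c ∈ univ) => key c)
    rw [Finset.sum_add_distrib, Finset.sum_add_distrib, Finset.sum_sub_distrib] at hsumkey
    rw [hsumfib d, hsumfib (fun v => (w v : ℤ))] at hsumkey
    have e1 : ∑ c, ((edgesIn ends (P c)).card : ℤ) = ((edgesIn ends Y).card : ℤ) := by
      rw [← Nat.cast_sum, hedgecard]
    have e2 : ∑ c, ((P c).card : ℤ) = (Y.card : ℤ) := by
      rw [← Nat.cast_sum, hcardfib]
    have e3 : ∑ _c : (inducedSG ends Y (∅ : Finset E)).ConnectedComponent, (1 : ℤ)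
        = (numComp ends Y ∅ : ℤ) := by
      rw [Finset.sum_const, Finset.card_univ, nsmul_eq_mul, mul_one]
      unfold numComp
      rw [Nat.card_eq_fintype_card]
    rw [e1, e2, e3] at hsumkey
    unfold genusB1
    linarith
end AuxC

section AuxD
variable (ends : E → V × V)

lemma sum_update_mem {Y : Finset V} {d : V → ℤ} {v : V} (hv : v ∈ Y) (b : ℤ) :
    ∑ x ∈ Y, Function.update d v b x = (∑ x ∈ Y, d x) - d v + b := by
  rw [Finset.sum_update_of_mem hv]
  have := Finset.sum_sdiff_eq_sub (Finset.singleton_subset_iff.mpr hv) (f := d)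
  rw [this, Finset.sum_singleton]
  ring

lemma sum_update_not_mem {Y : Finset V} {d : V → ℤ} {v : V} (hv : v ∉ Y) (b : ℤ) :
    ∑ x ∈ Y, Function.update d v b x = ∑ x ∈ Y, d x :=
  Finset.sum_congr rfl fun x hx => Function.update_of_ne (fun h => hv (by rw [← h]; exact hx)) _ _

lemma sdiff_insert_card {s R : Finset E} {e₀ : E} (he : e₀ ∈ s) (heR : e₀ ∉ R) :
    (s \ insert e₀ R).card + 1 = (s \ R).card := by
  have h1 : s \ insert e₀ R = (s \ R).erase e₀ := by
    ext x
    simp only [Finset.mem_sdiff, Finset.mem_insert, Finset.mem_erase]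
    tauto
  rw [h1, Finset.card_erase_of_mem (Finset.mem_sdiff.mpr ⟨he, heR⟩)]
  have : 0 < (s \ R).card := Finset.card_pos.mpr ⟨e₀, Finset.mem_sdiff.mpr ⟨he, heR⟩⟩
  omega

lemma sdiff_insert_eq {s R : Finset E} {e₀ : E} (he : e₀ ∉ s) :
    s \ insert e₀ R = s \ R := by
  ext x
  simp only [Finset.mem_sdiff, Finset.mem_insert]
  constructor
  · rintro ⟨hx, h2⟩; exact ⟨hx, fun h => h2 (Or.inr h)⟩
  · rintro ⟨hx, h2⟩
    refine ⟨hx, ?_⟩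
    rintro (rfl | h)
    · exact he hx
    · exact h2 h

lemma step_lift (R : Finset E) (d : V → ℤ) (e₀ : E) (he₀ : e₀ ∉ R) (v : V)
    (hv : v = (ends e₀).1 ∨ v = (ends e₀).2)
    (h : ∃ T : Finset E, T ⊆ univ \ insert e₀ R ∧ IsSpanningTree ends T ∧
        ∃ φ : E → V, (∀ e ∈ (univ \ insert e₀ R) \ T, φ e = (ends e).1 ∨ φ e = (ends e).2) ∧
          ∀ x, ((((univ \ insert e₀ R) \ T).filter fun e => φ e = x).card : ℤ) =
            Function.update d v (d v - 1) x) :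
    ∃ T : Finset E, T ⊆ univ \ R ∧ IsSpanningTree ends T ∧
      ∃ φ : E → V, (∀ e ∈ (univ \ R) \ T, φ e = (ends e).1 ∨ φ e = (ends e).2) ∧
        ∀ x, ((((univ \ R) \ T).filter fun e => φ e = x).card : ℤ) = d x := by
  obtain ⟨T, hTsub, htree, φ', hφ'1, hφ'2⟩ := h
  have he₀T : e₀ ∉ T := by
    intro hmem
    have := hTsub hmem
    simp [Finset.mem_sdiff, Finset.mem_insert] at this
  have he₀S : e₀ ∉ (univ \ insert e₀ R) \ T := by
    simp [Finset.mem_sdiff, Finset.mem_insert]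
  have hsd : (univ \ R) \ T = insert e₀ ((univ \ insert e₀ R) \ T) := by
    ext e
    simp only [Finset.mem_sdiff, Finset.mem_insert, Finset.mem_univ, true_and]
    constructor
    · rintro ⟨h1, h2⟩
      by_cases he : e = e₀
      · exact Or.inl he
      · exact Or.inr ⟨fun h => (h.elim he h1), h2⟩
    · rintro (rfl | ⟨h1, h2⟩)
      · exact ⟨he₀, he₀T⟩
      · exact ⟨fun h => h1 (Or.inr h), h2⟩
  refine ⟨T, ?_, htree, Function.update φ' e₀ v, ?_, ?_⟩
  · intro e he
    have := hTsub he
    simp only [Finset.mem_sdiff, Finset.mem_insert, Finset.mem_univ, true_and] at this ⊢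
    exact fun h => this (Or.inr h)
  · intro e he
    rw [hsd] at he
    rcases Finset.mem_insert.mp he with rfl | he'
    · rw [Function.update_self]; exact hv
    · have hne : e ≠ e₀ := fun h => he₀S (h ▸ he')
      rw [Function.update_of_ne hne]
      exact hφ'1 e he'
  · intro x
    rw [hsd, Finset.filter_insert]
    have hfc : (((univ \ insert e₀ R) \ T).filter fun e => Function.update φ' e₀ v e = x)
        = ((univ \ insert e₀ R) \ T).filter fun e => φ' e = x := by
      apply Finset.filter_congr
      intro e he
      have hne : e ≠ e₀ := fun h => he₀S (h ▸ he)
      rw [Function.update_of_ne hne]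
    by_cases hx : x = v
    · subst hx
      rw [if_pos (Function.update_self _ _ _), hfc,
        Finset.card_insert_of_notMem (fun h => he₀S (Finset.mem_filter.mp h).1)]
      have h2 := hφ'2 x
      rw [Function.update_self] at h2
      push_cast
      omega
    · rw [if_neg (by rw [Function.update_self]; exact fun h => hx h.symm), hfc]
      have h2 := hφ'2 x
      rw [Function.update_of_ne hx] at h2
      exact h2
end AuxD

section AuxE
variable (ends : E → V × V)

lemma main_ind : ∀ (g : ℕ) (R : Finset E) (d : V → ℤ),
    (spanGraph ends (univ \ R)).Connected →
    (∑ v, d v) = (g : ℤ) →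
    (((univ \ R : Finset E).card : ℤ) = (g : ℤ) + Fintype.card V - 1) →
    (∀ Y : Finset V, Y.Nonempty →
      (((edgesIn ends Y) \ R).card : ℤ) - Y.card + 1 ≤ ∑ v ∈ Y, d v) →
    ∃ T : Finset E, T ⊆ univ \ R ∧ IsSpanningTree ends T ∧
      ∃ φ : E → V, (∀ e ∈ (univ \ R) \ T, φ e = (ends e).1 ∨ φ e = (ends e).2) ∧
        ∀ v, ((((univ \ R) \ T).filter fun e => φ e = v).card : ℤ) = d v := by
  intro g
  induction g with
  | zero =>
    intro R d hconn hsum hcard hY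
    have hnn : ∀ x, 0 ≤ d x := by
      intro x
      have h1 := hY {x} ⟨x, Finset.mem_singleton_self x⟩
      rw [Finset.sum_singleton, Finset.card_singleton] at h1
      have h0 : (0 : ℤ) ≤ ((edgesIn ends {x} \ R).card : ℤ) := Int.natCast_nonneg _
      push_cast at h1
      linarith
    have hd0 : ∀ x, d x = 0 := by
      intro x
      have hz : ∑ v, d v = 0 := by rw [hsum]; norm_num
      exact (Finset.sum_eq_zero_iff_of_nonneg (fun i _ => hnn i)).mp hz x (Finset.mem_univ x)
    refine ⟨univ \ R, Finset.Subset.refl _, ⟨hconn, ?_⟩, fun e => (ends e).1, ?_, ?_⟩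
    · have : Nonempty V := hconn.nonempty
      have hpos : 0 < Fintype.card V := Fintype.card_pos
      have : ((univ \ R : Finset E).card : ℤ) = (Fintype.card V : ℤ) - 1 := by
        rw [hcard]; push_cast; ring
      omega
    · intro e he
      rw [Finset.sdiff_self] at he
      exact absurd he (Finset.notMem_empty e)
    · intro v
      rw [Finset.sdiff_self, Finset.filter_empty, Finset.card_empty, hd0 v]
      rfl
  | succ g IH =>
    intro R d hconn hsum hcard hY
    have hnn : ∀ x, 0 ≤ d x := by
      intro x
      have h1 := hY {x} ⟨x, Finset.mem_singleton_self x⟩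
      rw [Finset.sum_singleton, Finset.card_singleton] at h1
      have h0 : (0 : ℤ) ≤ ((edgesIn ends {x} \ R).card : ℤ) := Int.natCast_nonneg _
      push_cast at h1
      linarith
    by_cases hloop : ∃ e₀, e₀ ∉ R ∧ (ends e₀).1 = (ends e₀).2
    · -- loop case
      obtain ⟨e₀, he₀R, hl⟩ := hloop
      set v := (ends e₀).1 with hvdef
      set d' := Function.update d v (d v - 1) with hd'
      have hsum' : ∑ x, d' x = (g : ℤ) := by
        rw [hd', sum_update_mem (Finset.mem_univ v)]
        rw [hsum]
        push_cast
        ring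
      have hcard' : (((univ \ insert e₀ R : Finset E)).card : ℤ)
          = (g : ℤ) + Fintype.card V - 1 := by
        have h1 := sdiff_insert_card (s := (univ : Finset E)) (Finset.mem_univ e₀) he₀R
        have h2 : ((univ \ insert e₀ R : Finset E).card : ℤ) + 1 = ((univ \ R : Finset E).card : ℤ) := by
          exact_mod_cast congrArg (Nat.cast : ℕ → ℤ) h1
        rw [hcard] at h2
        push_cast at h2 ⊢
        linarith
      have hgeq : spanGraph ends (univ \ insert e₀ R) = spanGraph ends (univ \ R) := by
        ext x y
        constructor
        · rintro ⟨hne, e, he, hor⟩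
          refine ⟨hne, e, ?_, hor⟩
          simp only [Finset.mem_sdiff, Finset.mem_insert, Finset.mem_univ, true_and] at he ⊢
          exact fun h => he (Or.inr h)
        · rintro ⟨hne, e, he, hor⟩
          refine ⟨hne, e, ?_, hor⟩
          simp only [Finset.mem_sdiff, Finset.mem_insert, Finset.mem_univ, true_and] at he ⊢
          rintro (rfl | h)
          · rcases hor with h1 | h1
            · have hx := (Prod.ext_iff.mp h1).1
              have hy := (Prod.ext_iff.mp h1).2
              exact hne (hx.symm.trans (hl.trans hy))
            · have hx := (Prod.ext_iff.mp h1).1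
              have hy := (Prod.ext_iff.mp h1).2
              exact hne (hy.symm.trans (hl.symm.trans hx))
          · exact he h
      have hY' : ∀ Y : Finset V, Y.Nonempty →
          (((edgesIn ends Y) \ insert e₀ R).card : ℤ) - Y.card + 1 ≤ ∑ x ∈ Y, d' x := by
        intro Y hYne
        by_cases hvY : v ∈ Y
        · have he₀Y : e₀ ∈ edgesIn ends Y :=
            (mem_edgesIn ends).mpr ⟨hvY, by rw [← hl]; exact hvY⟩
          have hc := sdiff_insert_card (s := edgesIn ends Y) he₀Y he₀R
          have hc2 : ((edgesIn ends Y \ insert e₀ R).card : ℤ) + 1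
              = ((edgesIn ends Y \ R).card : ℤ) := by exact_mod_cast congrArg (Nat.cast : ℕ → ℤ) hc
          rw [hd', sum_update_mem hvY]
          have h3 := hY Y hYne
          linarith
        · have he₀Y : e₀ ∉ edgesIn ends Y := fun h => hvY ((mem_edgesIn ends).mp h).1
          rw [hd', sum_update_not_mem hvY, sdiff_insert_eq he₀Y]
          exact hY Y hYne
      exact step_lift ends R d e₀ he₀R v (Or.inl rfl)
        (IH (insert e₀ R) d' (hgeq ▸ hconn) hsum' hcard' hY')
    · -- no-loop case
      push_neg at hloop
      have hnl : ∀ e, e ∉ R → (ends e).1 ≠ (ends e).2 := hloop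
      have hne_V : Nonempty V := hconn.nonempty
      set f : Finset V → ℤ :=
        fun Y => (∑ x ∈ Y, d x) - ((edgesIn ends Y \ R).card : ℤ) + Y.card - 1 with hf
      have hf_nonneg : ∀ Y : Finset V, Y.Nonempty → 0 ≤ f Y := by
        intro Y hYne
        have := hY Y hYne
        rw [hf]
        simp only
        linarith
      have hf_univ : f univ = 0 := by
        rw [hf]
        simp only
        rw [edgesIn_univ, hsum, Finset.card_univ]
        linarith [hcard]
      have hsupermod : ∀ A B : Finset V, f (A ∪ B) + f (A ∩ B) ≤ f A + f B := by
        intro A B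
        have hsum2 : (∑ x ∈ A ∪ B, d x) + ∑ x ∈ A ∩ B, d x
            = (∑ x ∈ A, d x) + ∑ x ∈ B, d x := Finset.sum_union_inter
        have hcard2 : (A ∪ B).card + (A ∩ B).card = A.card + B.card :=
          Finset.card_union_add_card_inter A B
        have hedge : (edgesIn ends A \ R).card + (edgesIn ends B \ R).card ≤
            (edgesIn ends (A ∪ B) \ R).card + (edgesIn ends (A ∩ B) \ R).card := by
          have h1 : (edgesIn ends A \ R) ∪ (edgesIn ends B \ R) ⊆ edgesIn ends (A ∪ B) \ R := by
            intro e he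
            rcases Finset.mem_union.mp he with h | h <;>
              obtain ⟨h2, h3⟩ := Finset.mem_sdiff.mp h <;>
              obtain ⟨h4, h5⟩ := (mem_edgesIn ends).mp h2 <;>
              exact Finset.mem_sdiff.mpr ⟨(mem_edgesIn ends).mpr
                ⟨Finset.mem_union.mpr (by tauto), Finset.mem_union.mpr (by tauto)⟩, h3⟩
          have h2 : (edgesIn ends A \ R) ∩ (edgesIn ends B \ R) = edgesIn ends (A ∩ B) \ R := by
            ext e
            simp only [Finset.mem_inter, Finset.mem_sdiff, mem_edgesIn]
            tauto
          calc (edgesIn ends A \ R).card + (edgesIn ends B \ R).card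
              = ((edgesIn ends A \ R) ∪ (edgesIn ends B \ R)).card
                + ((edgesIn ends A \ R) ∩ (edgesIn ends B \ R)).card :=
                (Finset.card_union_add_card_inter _ _).symm
            _ ≤ _ := by
                rw [h2]
                exact Nat.add_le_add_right (Finset.card_le_card h1) _
        rw [hf]
        simp only
        push_cast at hedge ⊢
        push_cast at hcard2
        linarith
      classical
      set 𝒯 : Finset (Finset V) :=
        univ.filter (fun Y : Finset V => Y.Nonempty ∧ f Y = 0 ∧ 1 ≤ ∑ x ∈ Y, d x) with h𝒯
      have huniv𝒯 : (univ : Finset V) ∈ 𝒯 := by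
        rw [h𝒯, Finset.mem_filter]
        refine ⟨Finset.mem_univ _, Finset.univ_nonempty, hf_univ, ?_⟩
        rw [hsum]; push_cast; omega
      obtain ⟨A, hA𝒯, hAmin⟩ := Finset.exists_min_image 𝒯 Finset.card ⟨univ, huniv𝒯⟩
      rw [h𝒯, Finset.mem_filter] at hA𝒯
      obtain ⟨-, hAne, hAf, hAd⟩ := hA𝒯
      have hvex : ∃ v ∈ A, 1 ≤ d v := by
        by_contra hcon
        push_neg at hcon
        have hle : ∑ x ∈ A, d x ≤ 0 :=
          Finset.sum_nonpos (fun x hx => by have := hcon x hx; have := hnn x; omega)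
        omega
      obtain ⟨v, hvA, hdv⟩ := hvex
      have claimM : ∀ B : Finset V, B.Nonempty → f B = 0 → v ∈ B → A ⊆ B := by
        intro B hBne hBf hvB
        have hABne : (A ∩ B).Nonempty := ⟨v, Finset.mem_inter.mpr ⟨hvA, hvB⟩⟩
        have h1 : 0 ≤ f (A ∩ B) := hf_nonneg _ hABne
        have h2 : 0 ≤ f (A ∪ B) := hf_nonneg _ ⟨v, Finset.mem_union.mpr (Or.inl hvA)⟩
        have h3 := hsupermod A B
        have hABf : f (A ∩ B) = 0 := by omega
        have hABd : 1 ≤ ∑ x ∈ A ∩ B, d x :=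
          le_trans hdv (Finset.single_le_sum (fun x _ => hnn x)
            (Finset.mem_inter.mpr ⟨hvA, hvB⟩))
        have hAB𝒯 : A ∩ B ∈ 𝒯 := by
          rw [h𝒯, Finset.mem_filter]
          exact ⟨Finset.mem_univ _, hABne, hABf, hABd⟩
        have hcardle := hAmin _ hAB𝒯
        have heq : A ∩ B = A :=
          Finset.eq_of_subset_of_card_le Finset.inter_subset_left hcardle
        have hsub : A ⊆ A ∩ B := by rw [heq]
        exact fun x hx => (Finset.mem_inter.mp (hsub hx)).2
      have hloops_empty : ∀ x : V, edgesIn ends {x} \ R = ∅ := by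
        intro x
        ext e
        simp only [Finset.mem_sdiff, mem_edgesIn, Finset.mem_singleton, Finset.notMem_empty,
          iff_false, not_and]
        rintro ⟨h1, h2⟩ heR
        exact hnl e heR (h1.trans h2.symm)
      have hAnotsing : ∃ u ∈ A, u ≠ v := by
        by_contra hcon
        push_neg at hcon
        have hA1 : A = {v} := by
          apply Finset.eq_singleton_iff_unique_mem.mpr
          exact ⟨hvA, fun x hx => by by_contra h; exact h (hcon x hx)⟩
        rw [hA1, hf] at hAf
        simp only at hAf
        rw [hloops_empty v] at hAf
        rw [Finset.sum_singleton, Finset.card_singleton, Finset.card_empty] at hAf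
        omega
      have hedge_ex : ∃ e₀, e₀ ∉ R ∧ ((ends e₀).1 ∈ A ∧ (ends e₀).2 ∈ A) ∧
          ((ends e₀).1 = v ∨ (ends e₀).2 = v) := by
        by_contra hcon
        push_neg at hcon
        have hE : edgesIn ends (A.erase v) \ R = edgesIn ends A \ R := by
          apply Finset.Subset.antisymm
          · exact Finset.sdiff_subset_sdiff (edgesIn_mono ends (Finset.erase_subset _ _))
              (le_refl _)
          · intro e he
            obtain ⟨heA, heR⟩ := Finset.mem_sdiff.mp he
            obtain ⟨h1, h2⟩ := (mem_edgesIn ends).mp heA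
            obtain ⟨hn1, hn2⟩ := hcon e heR ⟨h1, h2⟩
            exact Finset.mem_sdiff.mpr ⟨(mem_edgesIn ends).mpr
              ⟨Finset.mem_erase.mpr ⟨hn1, h1⟩, Finset.mem_erase.mpr ⟨hn2, h2⟩⟩, heR⟩
        obtain ⟨u, huA, hune⟩ := hAnotsing
        have herane : (A.erase v).Nonempty := ⟨u, Finset.mem_erase.mpr ⟨hune, huA⟩⟩
        have hge := hf_nonneg _ herane
        rw [hf] at hge hAf
        simp only at hge hAf
        rw [hE, Finset.sum_erase_eq_sub hvA, Finset.card_erase_of_mem hvA] at hge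
        have hA1 : 1 ≤ A.card := Finset.card_pos.mpr hAne
        rw [Nat.cast_sub hA1] at hge
        push_cast at hge
        omega
      obtain ⟨e₀, he₀R, ⟨hA1, hA2⟩, hvor⟩ := hedge_ex
      have hne12 : (ends e₀).1 ≠ (ends e₀).2 := hnl e₀ he₀R
      obtain ⟨u, hune, huA, hends⟩ : ∃ u, u ≠ v ∧ u ∈ A ∧
          (ends e₀ = (v, u) ∨ ends e₀ = (u, v)) := by
        rcases hvor with h | h
        · refine ⟨(ends e₀).2, fun hc => hne12 (h.trans hc.symm), hA2, Or.inl ?_⟩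
          rw [← h]
        · refine ⟨(ends e₀).1, fun hc => hne12 (hc.trans h.symm), hA1, Or.inr ?_⟩
          rw [← h]
      have hv12 : v = (ends e₀).1 ∨ v = (ends e₀).2 := by
        rcases hends with h | h
        · exact Or.inl (by rw [h])
        · exact Or.inr (by rw [h])
      have hu12 : u = (ends e₀).1 ∨ u = (ends e₀).2 := by
        rcases hends with h | h
        · exact Or.inr (by rw [h])
        · exact Or.inl (by rw [h])
      -- deleting e₀ keeps the graph connected
      have hconn' : (spanGraph ends (univ \ insert e₀ R)).Connected := by
        by_contra hnc
        set Z : Finset V :=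
          univ.filter (fun x => (spanGraph ends (univ \ insert e₀ R)).Reachable u x) with hZ
        have huZ : u ∈ Z := by
          rw [hZ, Finset.mem_filter]
          exact ⟨Finset.mem_univ _, SimpleGraph.Reachable.refl u⟩
        have hclosed : ∀ x y, (spanGraph ends (univ \ insert e₀ R)).Adj x y → x ∈ Z → y ∈ Z := by
          intro x y hxy hx
          rw [hZ, Finset.mem_filter] at hx ⊢
          exact ⟨Finset.mem_univ _, hx.2.trans hxy.reachable⟩
        have hvZ : v ∉ Z := by
          intro hvZ
          apply hnc
          have hGadj_Z : ∀ x y, (spanGraph ends (univ \ R)).Adj x y → x ∈ Z → y ∈ Z := by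
            intro x y hxy hx
            obtain ⟨hne, e, he, hor⟩ := hxy
            by_cases hee : e = e₀
            · subst hee
              have hymem : y = u ∨ y = v := by
                rcases hor with h' | h' <;> rcases hends with h | h
                · exact Or.inl (Prod.ext_iff.mp (h'.symm.trans h)).2
                · exact Or.inr (Prod.ext_iff.mp (h'.symm.trans h)).2
                · exact Or.inr (Prod.ext_iff.mp (h'.symm.trans h)).1
                · exact Or.inl (Prod.ext_iff.mp (h'.symm.trans h)).1
              rcases hymem with rfl | rfl
              · exact huZ
              · exact hvZ
            · have hmem : e ∈ univ \ insert e₀ R := by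
                simp only [Finset.mem_sdiff, Finset.mem_insert, Finset.mem_univ, true_and]
                rintro (rfl | h)
                · exact hee rfl
                · exact (Finset.mem_sdiff.mp he).2 h
              exact hclosed x y ⟨hne, e, hmem, hor⟩ hx
          have hstep : ∀ {a b : V}, (spanGraph ends (univ \ R)).Walk a b → a ∈ Z → b ∈ Z := by
            intro a b p
            induction p with
            | nil => exact id
            | cons h p ih => intro ha; exact ih (hGadj_Z _ _ h ha)
          have hall : ∀ x, x ∈ Z := by
            intro x
            obtain ⟨p⟩ := hconn.preconnected u x
            exact hstep p huZ
          haveI := hne_V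
          refine ⟨fun a b => ?_⟩
          have ha := (Finset.mem_filter.mp (hall a)).2
          have hb := (Finset.mem_filter.mp (hall b)).2
          exact ha.symm.trans hb
        -- crossing edges analysis
        set Zc : Finset V := univ \ Z with hZc
        have hvZc : v ∈ Zc := Finset.mem_sdiff.mpr ⟨Finset.mem_univ _, hvZ⟩
        have hcross : ∀ e, e ∉ R → e ≠ e₀ → ((ends e).1 ∈ Z ↔ (ends e).2 ∈ Z) := by
          intro e heR hee
          have hmem : e ∈ univ \ insert e₀ R := by
            simp only [Finset.mem_sdiff, Finset.mem_insert, Finset.mem_univ, true_and]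
            rintro (rfl | h)
            · exact hee rfl
            · exact heR h
          constructor
          · intro h1
            by_cases heq : (ends e).1 = (ends e).2
            · rwa [← heq]
            · exact hclosed _ _ ⟨heq, e, hmem, Or.inl rfl⟩ h1
          · intro h2
            by_cases heq : (ends e).1 = (ends e).2
            · rwa [heq]
            · exact hclosed _ _ ⟨Ne.symm heq, e, hmem, Or.inr rfl⟩ h2
        have he₀Z : e₀ ∉ edgesIn ends Z := by
          intro hc
          obtain ⟨h1, h2⟩ := (mem_edgesIn ends).mp hc
          rcases hv12 with h | h
          · exact hvZ (h ▸ h1)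
          · exact hvZ (h ▸ h2)
        have he₀Zc : e₀ ∉ edgesIn ends Zc := by
          intro hc
          obtain ⟨h1, h2⟩ := (mem_edgesIn ends).mp hc
          rcases hu12 with h | h
          · exact (Finset.mem_sdiff.mp (h ▸ h1)).2 huZ
          · exact (Finset.mem_sdiff.mp (h ▸ h2)).2 huZ
        have hsplit : (edgesIn ends Z \ R) ∪ (edgesIn ends Zc \ R) = (univ \ R).erase e₀ := by
          ext e
          simp only [Finset.mem_union, Finset.mem_sdiff, Finset.mem_erase, Finset.mem_univ,
            true_and]
          constructor
          · rintro (⟨h1, hR⟩ | ⟨h1, hR⟩)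
            · exact ⟨fun hc => he₀Z (hc ▸ h1), hR⟩
            · exact ⟨fun hc => he₀Zc (hc ▸ h1), hR⟩
          · rintro ⟨hee, hR⟩
            by_cases h1 : (ends e).1 ∈ Z
            · exact Or.inl ⟨(mem_edgesIn ends).mpr ⟨h1, (hcross e hR hee).mp h1⟩, hR⟩
            · have h2 : (ends e).2 ∉ Z := fun hc => h1 ((hcross e hR hee).mpr hc)
              exact Or.inr ⟨(mem_edgesIn ends).mpr
                ⟨Finset.mem_sdiff.mpr ⟨Finset.mem_univ _, h1⟩,
                 Finset.mem_sdiff.mpr ⟨Finset.mem_univ _, h2⟩⟩, hR⟩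
        have hdisj : Disjoint (edgesIn ends Z \ R) (edgesIn ends Zc \ R) := by
          rw [Finset.disjoint_left]
          intro e he1 he2
          have h1 := ((mem_edgesIn ends).mp (Finset.mem_sdiff.mp he1).1).1
          have h2 := ((mem_edgesIn ends).mp (Finset.mem_sdiff.mp he2).1).1
          exact (Finset.mem_sdiff.mp h2).2 h1
        have he₀univ : e₀ ∈ (univ : Finset E) \ R :=
          Finset.mem_sdiff.mpr ⟨Finset.mem_univ _, he₀R⟩
        have hcards : (edgesIn ends Z \ R).card + (edgesIn ends Zc \ R).card + 1
            = ((univ : Finset E) \ R).card := by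
          rw [← Finset.card_union_of_disjoint hdisj, hsplit,
            Finset.card_erase_of_mem he₀univ]
          have hpos : 0 < ((univ : Finset E) \ R).card := Finset.card_pos.mpr ⟨e₀, he₀univ⟩
          omega
        have hZne : Z.Nonempty := ⟨u, huZ⟩
        have hZcne : Zc.Nonempty := ⟨v, hvZc⟩
        have hsum3 : (∑ x ∈ Zc, d x) + ∑ x ∈ Z, d x = ∑ x, d x := by
          rw [hZc]
          exact Finset.sum_sdiff (Finset.subset_univ Z)
        have hcard3 : Zc.card + Z.card = Fintype.card V := by
          rw [hZc, ← Finset.card_univ]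
          exact Finset.card_sdiff_add_card_eq_card (Finset.subset_univ Z)
        have hfZ := hf_nonneg Z hZne
        have hfZc := hf_nonneg Zc hZcne
        have hzero : f Zc = 0 := by
          rw [hf] at hfZ hfZc ⊢
          simp only at hfZ hfZc ⊢
          have hc1 : ((edgesIn ends Z \ R).card : ℤ) + ((edgesIn ends Zc \ R).card : ℤ) + 1
              = (((univ : Finset E) \ R).card : ℤ) := by exact_mod_cast hcards
          have hc2 : (Zc.card : ℤ) + (Z.card : ℤ) = (Fintype.card V : ℤ) := by
            exact_mod_cast hcard3
          rw [hsum] at hsum3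
          push_cast at hc1 hc2 ⊢
          linarith
        have hsubA := claimM Zc hZcne hzero hvZc
        exact (Finset.mem_sdiff.mp (hsubA huA)).2 huZ
      -- set up the recursive call
      set d' := Function.update d v (d v - 1) with hd'
      have hsum' : ∑ x, d' x = (g : ℤ) := by
        rw [hd', sum_update_mem (Finset.mem_univ v), hsum]
        push_cast
        ring
      have hcard' : (((univ \ insert e₀ R : Finset E)).card : ℤ)
          = (g : ℤ) + Fintype.card V - 1 := by
        have h1 := sdiff_insert_card (s := (univ : Finset E)) (Finset.mem_univ e₀) he₀R
        have h2 : ((univ \ insert e₀ R : Finset E).card : ℤ) + 1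
            = ((univ \ R : Finset E).card : ℤ) := by
          exact_mod_cast congrArg (Nat.cast : ℕ → ℤ) h1
        rw [hcard] at h2
        push_cast at h2 ⊢
        linarith
      have hY' : ∀ Y : Finset V, Y.Nonempty →
          (((edgesIn ends Y) \ insert e₀ R).card : ℤ) - Y.card + 1 ≤ ∑ x ∈ Y, d' x := by
        intro Y hYne
        by_cases hvY : v ∈ Y
        · by_cases huY : u ∈ Y
          · have he₀Y : e₀ ∈ edgesIn ends Y := by
              rcases hends with h | h
              · exact (mem_edgesIn ends).mpr ⟨by rw [h]; exact hvY, by rw [h]; exact huY⟩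
              · exact (mem_edgesIn ends).mpr ⟨by rw [h]; exact huY, by rw [h]; exact hvY⟩
            have hc := sdiff_insert_card (s := edgesIn ends Y) he₀Y he₀R
            have hc2 : ((edgesIn ends Y \ insert e₀ R).card : ℤ) + 1
                = ((edgesIn ends Y \ R).card : ℤ) := by
              exact_mod_cast congrArg (Nat.cast : ℕ → ℤ) hc
            rw [hd', sum_update_mem hvY]
            have h3 := hY Y hYne
            linarith
          · have he₀Y : e₀ ∉ edgesIn ends Y := by
              intro hc
              obtain ⟨h1, h2⟩ := (mem_edgesIn ends).mp hc
              rcases hends with h | h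
              · rw [h] at h2; exact huY h2
              · rw [h] at h1; exact huY h1
            rw [sdiff_insert_eq he₀Y, hd', sum_update_mem hvY]
            have hft : f Y ≠ 0 := fun h0 => huY (claimM Y hYne h0 hvY huA)
            have hfge := hf_nonneg Y hYne
            rw [hf] at hft hfge
            simp only at hft hfge
            have h1 : 1 ≤ (∑ x ∈ Y, d x) - ((edgesIn ends Y \ R).card : ℤ) + Y.card - 1 := by
              omega
            linarith
        · have he₀Y : e₀ ∉ edgesIn ends Y := by
            intro hc
            obtain ⟨h1, h2⟩ := (mem_edgesIn ends).mp hc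
            rcases hends with h | h
            · rw [h] at h1; exact hvY h1
            · rw [h] at h2; exact hvY h2
          rw [sdiff_insert_eq he₀Y, hd', sum_update_not_mem hvY]
          exact hY Y hYne
      exact step_lift ends R d e₀ he₀R v hv12
        (IH (insert e₀ R) d' hconn' hsum' hcard' hY')

end AuxE

/-- An–Baker–Kuperberg–Shokrieh; Lemma 5.9 of the paper.  A divisor `d`
on a connected weighted multigraph `G` of genus `g` is a break divisor if and only if
`deg d = g` and `Σ_{v ∈ Y} d_v ≥ g(Y)` for every nonempty subset `Y` of vertices. -/
theorem stmt5 [Nonempty V] (ends : E → V × V) (w : V → ℕ) (d : V → ℤ)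
    (hGconn : (spanGraph ends univ).Connected) :
    IsBreakDivisor ends w d ↔
      ((∑ v, d v) = genusOf ends w univ ∅ ∧
        ∀ Y : Finset V, Y.Nonempty → genusB1 ends w Y ≤ ∑ v ∈ Y, d v) := by
  classical
  constructor
  · rintro ⟨T, hT, φ, hφ, hdv⟩
    have hTsub : T ⊆ univ := Finset.subset_univ T
    have hcount : ∑ v, (((univ \ T).filter fun e => φ e = v).card : ℤ)
        = (((univ : Finset E) \ T).card : ℤ) := by
      rw [← Nat.cast_sum]
      exact_mod_cast congrArg (Nat.cast : ℕ → ℤ)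
        (Finset.card_eq_sum_card_fiberwise (fun e _ => Finset.mem_univ (φ e))).symm
    have hTle : T.card ≤ Fintype.card E := by
      rw [← Finset.card_univ]
      exact Finset.card_le_card hTsub
    have hcardsd : ((univ : Finset E) \ T).card = Fintype.card E - T.card := by
      rw [Finset.card_sdiff_of_subset hTsub, Finset.card_univ]
    have hdeg : (∑ v, d v) = genusOf ends w univ ∅ := by
      unfold genusOf
      rw [edgesIn_univ, Finset.sdiff_empty]
      have h1 : ∑ v, d v
          = (∑ v, (w v : ℤ)) + ∑ v, (((univ \ T).filter fun e => φ e = v).card : ℤ) := by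
        rw [← Finset.sum_add_distrib]
        exact Finset.sum_congr rfl fun v _ => hdv v
      rw [h1, hcount]
      have h3 := hT.2
      simp only [Finset.card_univ]
      have h4 : (((univ : Finset E) \ T).card : ℤ) = (Fintype.card E : ℤ) - T.card := by
        rw [hcardsd, Nat.cast_sub hTle]
      rw [h4]
      have h5 : (T.card : ℤ) + 1 = (Fintype.card V : ℤ) := by exact_mod_cast h3
      push_cast
      linarith
    refine ⟨hdeg, ?_⟩
    rw [genus_forms ends]
    intro Y hYne
    have hsub2 : edgesIn ends Y \ T ⊆ (univ \ T).filter (fun e => φ e ∈ Y) := by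
      intro e he
      obtain ⟨heY, heT⟩ := Finset.mem_sdiff.mp he
      obtain ⟨h1, h2⟩ := (mem_edgesIn ends).mp heY
      have hmem : e ∈ univ \ T := Finset.mem_sdiff.mpr ⟨Finset.mem_univ _, heT⟩
      rcases hφ e hmem with h | h <;>
        exact Finset.mem_filter.mpr ⟨hmem, by rw [h]; assumption⟩
    have hfib : (((univ \ T).filter fun e => φ e ∈ Y).card)
        = ∑ v ∈ Y, (((univ \ T).filter fun e => φ e = v).card) := by
      rw [Finset.card_eq_sum_card_fiberwise (s := (univ \ T).filter fun e => φ e ∈ Y) (f := φ) (t := Y)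
        (fun e he => (Finset.mem_filter.mp he).2)]
      apply Finset.sum_congr rfl
      intro v hv
      congr 1
      ext e
      simp only [Finset.mem_filter]
      constructor
      · rintro ⟨⟨h1, h2⟩, h3⟩; exact ⟨h1, h3⟩
      · rintro ⟨h1, h3⟩; exact ⟨⟨h1, h3 ▸ hv⟩, h3⟩
    have hforest := tree_forest_bound ends hT hYne
    have hEsplit : (edgesIn ends Y \ T).card + (T ∩ edgesIn ends Y).card
        = (edgesIn ends Y).card := by
      rw [Finset.inter_comm]
      have hss : edgesIn ends Y ∩ T ⊆ edgesIn ends Y := Finset.inter_subset_left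
      have h6 := Finset.card_sdiff_add_card_eq_card hss
      rwa [Finset.sdiff_inter_self_left] at h6
    have hle := Finset.card_le_card hsub2
    have hsumY : ∑ v ∈ Y, d v
        = (∑ v ∈ Y, (w v : ℤ)) + ∑ v ∈ Y, (((univ \ T).filter fun e => φ e = v).card : ℤ) := by
      rw [← Finset.sum_add_distrib]
      exact Finset.sum_congr rfl fun v _ => hdv v
    have hsc : (∑ v ∈ Y, (((univ \ T).filter fun e => φ e = v).card : ℤ))
        = ((((univ \ T).filter fun e => φ e ∈ Y).card : ℤ)) := by
      rw [← Nat.cast_sum, hfib]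
    have c1 : ((edgesIn ends Y \ T).card : ℤ) ≤ (((univ \ T).filter fun e => φ e ∈ Y).card : ℤ) := by
      exact_mod_cast hle
    have c2 : ((edgesIn ends Y \ T).card : ℤ) + ((T ∩ edgesIn ends Y).card : ℤ)
        = ((edgesIn ends Y).card : ℤ) := by exact_mod_cast hEsplit
    have c3 : ((T ∩ edgesIn ends Y).card : ℤ) + 1 ≤ (Y.card : ℤ) := by exact_mod_cast hforest
    rw [hsumY, hsc]
    linarith
  · rintro ⟨hdeg, hgen⟩
    have h1 := (genus_forms ends w d).mp hgen
    set d' : V → ℤ := fun v => d v - w v with hd'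
    have hconn1 : (spanGraph ends ((univ : Finset E) \ ∅)).Connected := by
      rw [Finset.sdiff_empty]
      exact hGconn
    have hn_le : Fintype.card V ≤ Fintype.card E + 1 := by
      have h := ncomp_union ends ∅ univ
      rw [Finset.empty_union, ncomp_empty ends,
        ncomp_conn ends hGconn, Finset.card_univ] at h
      omega
    set gn : ℕ := Fintype.card E + 1 - Fintype.card V with hgn
    have hgnz : (gn : ℤ) = (Fintype.card E : ℤ) + 1 - Fintype.card V := by
      rw [hgn, Nat.cast_sub hn_le]
      push_cast
      ring
    have hdegsimp : ∑ v, d v = (Fintype.card E : ℤ) - Fintype.card V + 1 + ∑ v, (w v : ℤ) := by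
      rw [hdeg]
      unfold genusOf
      rw [edgesIn_univ, Finset.sdiff_empty, Finset.card_univ, Finset.card_univ]
    have hsum' : ∑ v, d' v = (gn : ℤ) := by
      rw [hd', Finset.sum_sub_distrib, hdegsimp, hgnz]
      ring
    have hcard' : (((univ : Finset E) \ ∅).card : ℤ) = (gn : ℤ) + Fintype.card V - 1 := by
      rw [Finset.sdiff_empty, Finset.card_univ, hgnz]
      ring
    have hY' : ∀ Y : Finset V, Y.Nonempty →
        ((edgesIn ends Y \ (∅ : Finset E)).card : ℤ) - Y.card + 1 ≤ ∑ v ∈ Y, d' v := by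
      intro Y hYne
      have h2 := h1 Y hYne
      rw [Finset.sdiff_empty, hd', Finset.sum_sub_distrib]
      linarith
    obtain ⟨T, hTsub, htree, φ, hφ1, hφ2⟩ := main_ind ends gn ∅ d' hconn1 hsum' hcard' hY'
    rw [Finset.sdiff_empty] at hφ1 hφ2
    refine ⟨T, htree, φ, hφ1, fun v => ?_⟩
    have h3 := hφ2 v
    rw [hd'] at h3
    simp only at h3
    linarith
end

section
/- Let G be a weighted multigraph of genus g, S ⊆ E(G), d a divisor with deg d + |S| = g, and h any positive polarization. Then the pair (S, d) is polystable (equivalently, since semistable = stable in degree g, stable) if and only if d is a break divisor on the graph G − S obtained by deleting the edges in S. -/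
open Finset

variable {V E : Type} [Fintype V] [Fintype E] [DecidableEq V] [DecidableEq E]

/-- Number of connected components of the graph on the full vertex set with edge set `E₀`. -/
noncomputable def numCompOn (ends : E → V × V) (E₀ : Finset E) : ℕ :=
  Nat.card (spanGraph ends E₀).ConnectedComponent

/-- `d` is a break divisor on the (possibly disconnected) multigraph with vertex set `V`
and edge set `E₀`: there is a spanning forest `T ⊆ E₀` (one spanning tree per connected
component) and an assignment `φ` of an endpoint to each edge of `E₀ \ T` with
`d = Σ_v g_v · v + Σ_{e ∈ E₀ \ T} φ(e)`. -/
noncomputable def IsBreakDivisorOn (ends : E → V × V) (w : V → ℕ) (E₀ : Finset E)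
    (d : V → ℤ) : Prop :=
  ∃ T : Finset E, T ⊆ E₀ ∧ numCompOn ends T = numCompOn ends E₀ ∧
    T.card + numCompOn ends E₀ = Fintype.card V ∧
    ∃ φ : E → V, (∀ e ∈ E₀ \ T, φ e = (ends e).1 ∨ φ e = (ends e).2) ∧
      ∀ v, d v = (w v : ℤ) + ((E₀ \ T).filter fun e => φ e = v).card

/-! ### Auxiliary machinery -/
set_option linter.unusedSectionVars false

section Aux

/-- `n`-step reachability along an abstract step relation. -/
def reachN (step : V → V → Prop) (q : V) : ℕ → V → Prop
  | 0 => fun v => v = q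
  | n+1 => fun v => ∃ u, reachN step q n u ∧ step u v

open Classical in
/-- Rank (distance from `q`) of a vertex. -/
noncomputable def rankOf (step : V → V → Prop) (q : V) (v : V) : ℕ :=
  if h : ∃ n, reachN step q n v then Nat.find h else 0

lemma rankOf_le {step : V → V → Prop} {q v : V} {n : ℕ} (h : reachN step q n v) :
    rankOf step q v ≤ n := by
  classical
  rw [rankOf, dif_pos ⟨n, h⟩]
  exact Nat.find_le h

lemma reach_rankOf {step : V → V → Prop} {q v : V} (h : ∃ n, reachN step q n v) :
    reachN step q (rankOf step q v) v := by
  classical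
  rw [rankOf, dif_pos h]
  exact Nat.find_spec h

lemma step_of_ne {step : V → V → Prop} {q v : V} (h : ∃ n, reachN step q n v)
    (hv : v ≠ q) :
    ∃ u, step u v ∧ (∃ m, reachN step q m u) ∧ rankOf step q u < rankOf step q v := by
  have hr := reach_rankOf h
  rcases hn : rankOf step q v with _ | n
  · rw [hn] at hr; exact absurd hr hv
  · rw [hn] at hr
    obtain ⟨u, hu, hstep⟩ := hr
    exact ⟨u, hstep, ⟨n, hu⟩, by have := rankOf_le hu; omega⟩

lemma reachN_of_reflTransGen {step : V → V → Prop} {q v : V}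
    (h : Relation.ReflTransGen step q v) : ∃ n, reachN step q n v := by
  induction h with
  | refl => exact ⟨0, rfl⟩
  | tail _ hstep ih => obtain ⟨n, hn⟩ := ih; exact ⟨n + 1, _, hn, hstep⟩

variable (ends : E → V × V)

lemma card_filter_incident (F : Finset E) (Y : Finset V) :
    (F.filter fun e => (ends e).1 ∈ Y ∨ (ends e).2 ∈ Y).card
      = (F.filter fun e => (ends e).1 ∈ Y ∧ (ends e).2 ∈ Y).card
        + (F.filter fun e => Xor ((ends e).1 ∈ Y) ((ends e).2 ∈ Y)).card := by

  have hs : (F.filter fun e => (ends e).1 ∈ Y ∨ (ends e).2 ∈ Y)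
      = (F.filter fun e => (ends e).1 ∈ Y ∧ (ends e).2 ∈ Y)
        ∪ (F.filter fun e => Xor ((ends e).1 ∈ Y) ((ends e).2 ∈ Y)) := by
    ext e; simp only [Finset.mem_filter, Finset.mem_union]; simp only [Xor]; tauto
  rw [hs, Finset.card_union_of_disjoint]
  rw [Finset.disjoint_left]
  intro e he1 he2
  simp only [Finset.mem_filter] at he1 he2; simp only [Xor] at he2
  tauto

lemma card_split (F : Finset E) (Y : Finset V) :
    F.card = (F.filter fun e => (ends e).1 ∈ Y ∧ (ends e).2 ∈ Y).card
      + (F.filter fun e => Xor ((ends e).1 ∈ Y) ((ends e).2 ∈ Y)).card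
      + (F.filter fun e => (ends e).1 ∉ Y ∧ (ends e).2 ∉ Y).card := by

  rw [← card_filter_incident]
  have h := Finset.card_filter_add_card_filter_not
    (s := F) (p := fun e => (ends e).1 ∈ Y ∨ (ends e).2 ∈ Y)
  have hc : (F.filter fun e => ¬ ((ends e).1 ∈ Y ∨ (ends e).2 ∈ Y))
      = (F.filter fun e => (ends e).1 ∉ Y ∧ (ends e).2 ∉ Y) := by
    apply Finset.filter_congr; intro e _; tauto
  rw [hc] at h
  omega

lemma edgesIn_sdiff (S : Finset E) (Y : Finset V) :
    edgesIn ends Y \ S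
      = (univ \ S).filter fun e => (ends e).1 ∈ Y ∧ (ends e).2 ∈ Y := by
  ext e; simp [edgesIn, Finset.mem_sdiff, Finset.mem_filter]; tauto

lemma cutEdges_sdiff (S : Finset E) (Y : Finset V) :
    cutEdges ends Y \ S
      = (univ \ S).filter fun e => Xor ((ends e).1 ∈ Y) ((ends e).2 ∈ Y) := by
  ext e; simp [cutEdges, Finset.mem_sdiff, Finset.mem_filter]; tauto

lemma xor_compl (Y : Finset V) (e : E) :
    (Xor ((ends e).1 ∈ univ \ Y) ((ends e).2 ∈ univ \ Y))
      ↔ Xor ((ends e).1 ∈ Y) ((ends e).2 ∈ Y) := by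
  simp [Xor, Finset.mem_sdiff]; tauto

lemma genus_univ : genusOf ends w univ ∅
    = (Fintype.card E : ℤ) - Fintype.card V + 1 + ∑ v, (w v : ℤ) := by
  simp [genusOf, edgesIn]

end Aux
section Aux2
set_option linter.unusedSectionVars false
variable (ends : E → V × V) (w : V → ℕ) (d h : V → ℤ) (S : Finset E)

lemma stable_iff_int (hpos : ∀ v, 0 < h v)
    (hdeg : (∑ v, d v) + S.card = genusOf ends w univ ∅) :
    Stable ends w h S d ↔ ∀ Y : Finset V, Y.Nonempty → Y ≠ univ →
      (∑ v ∈ Y, d v) < genusOf ends w Y S + (((cutEdges ends Y) \ S).card : ℤ) := by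
  have hfac : ∀ Y : Finset V, basicBound ends w h S d Y
      = (genusOf ends w Y S : ℚ) - 1 + (∑ v ∈ Y, (h v : ℚ)) / (∑ v, (h v : ℚ))
        + (((cutEdges ends Y) \ S).card : ℚ) := by
    intro Y
    have h2 : ((∑ v, (d v : ℚ)) + S.card + 1 - (genusOf ends w univ ∅ : ℚ)) = 1 := by
      have h3 : ((∑ v, d v : ℤ) : ℚ) + ((S.card : ℤ) : ℚ)
          = ((genusOf ends w univ ∅ : ℤ) : ℚ) := by exact_mod_cast congrArg (Int.cast : ℤ → ℚ) hdeg
      push_cast at h3 ⊢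
      linarith
    rw [basicBound, h2, mul_one]
  have hH : ∀ Y : Finset V, Y.Nonempty → (0:ℚ) < ∑ v, (h v : ℚ) := by
    intro Y hne
    have : (univ : Finset V).Nonempty := ⟨hne.choose, Finset.mem_univ _⟩
    exact Finset.sum_pos (fun v _ => by exact_mod_cast hpos v) this
  constructor
  · intro hst Y hne hY
    have h1 := hst Y hne hY
    rw [hfac] at h1
    have ht1 : (∑ v ∈ Y, (h v : ℚ)) / (∑ v, (h v : ℚ)) < 1 := by
      rw [div_lt_one (hH Y hne)]
      have hsd : (univ \ Y : Finset V).Nonempty := by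
        rw [Finset.sdiff_nonempty]
        intro hsub
        exact hY (Finset.univ_subset_iff.mp hsub)
      have hpos2 : (0:ℚ) < ∑ v ∈ univ \ Y, (h v : ℚ) :=
        Finset.sum_pos (fun v _ => by exact_mod_cast hpos v) hsd
      have := Finset.sum_sdiff (f := fun v => (h v : ℚ)) (Finset.subset_univ Y)
      linarith
    have h4 : (∑ v ∈ Y, (d v : ℚ)) < (genusOf ends w Y S : ℚ) + (((cutEdges ends Y) \ S).card : ℚ) := by
      linarith
    have h5 : ((∑ v ∈ Y, d v : ℤ) : ℚ) < (((genusOf ends w Y S + ((cutEdges ends Y) \ S).card) : ℤ) : ℚ) := by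
      push_cast
      push_cast at h4
      linarith
    exact_mod_cast h5
  · intro hint Y hne hY
    have h1 := hint Y hne hY
    rw [hfac]
    have ht0 : (0:ℚ) < (∑ v ∈ Y, (h v : ℚ)) / (∑ v, (h v : ℚ)) :=
      div_pos (Finset.sum_pos (fun v _ => by exact_mod_cast hpos v) hne) (hH Y hne)
    have h5 : ((∑ v ∈ Y, d v : ℤ) : ℚ) + 1 ≤ (((genusOf ends w Y S + ((cutEdges ends Y) \ S).card) : ℤ) : ℚ) := by
      exact_mod_cast Int.add_one_le_iff.mpr h1
    push_cast at h5 ⊢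
    linarith

lemma deg_identity (hdeg : (∑ v, d v) + S.card = genusOf ends w univ ∅) :
    (∑ v, d v) = (∑ v, (w v : ℤ)) + ((univ \ S : Finset E)).card - Fintype.card V + 1 := by
  rw [genus_univ] at hdeg
  have h1 : ((univ \ S : Finset E)).card = Fintype.card E - S.card := by
    rw [Finset.card_sdiff_of_subset (Finset.subset_univ S), Finset.card_univ]
  have hS : S.card ≤ Fintype.card E := by
    rw [← Finset.card_univ]; exact Finset.card_le_card (Finset.subset_univ S)
  omega

lemma lower_bound
    (hint : ∀ Y : Finset V, Y.Nonempty → Y ≠ univ →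
      (∑ v ∈ Y, d v) < genusOf ends w Y S + (((cutEdges ends Y) \ S).card : ℤ))
    (hdeg : (∑ v, d v) + S.card = genusOf ends w univ ∅)
    {Z : Finset V} (hZ : Z.Nonempty) (hZu : Z ≠ univ) :
    (((univ \ S : Finset E).filter fun e => (ends e).1 ∈ Z ∧ (ends e).2 ∈ Z).card : ℤ)
      - Z.card + 1 ≤ (∑ v ∈ Z, d v) - ∑ v ∈ Z, (w v : ℤ) := by

  set Y : Finset V := univ \ Z with hYdef
  have hYne : Y.Nonempty := by
    rw [hYdef, Finset.sdiff_nonempty]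
    intro hsub
    exact hZu (Finset.univ_subset_iff.mp hsub)
  have hYu : Y ≠ univ := by
    intro hh
    obtain ⟨z, hz⟩ := hZ
    have : z ∈ Y := hh ▸ Finset.mem_univ z
    rw [hYdef, Finset.mem_sdiff] at this
    exact this.2 hz
  have h1 := hint Y hYne hYu
  rw [genusOf, edgesIn_sdiff, cutEdges_sdiff] at h1
  have hboth : ((univ \ S : Finset E).filter fun e => (ends e).1 ∈ Y ∧ (ends e).2 ∈ Y)
      = ((univ \ S : Finset E).filter fun e => (ends e).1 ∉ Z ∧ (ends e).2 ∉ Z) := by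
    apply Finset.filter_congr; intro e _; simp [hYdef]
  have hxor : ((univ \ S : Finset E).filter fun e => Xor ((ends e).1 ∈ Y) ((ends e).2 ∈ Y))
      = ((univ \ S : Finset E).filter fun e => Xor ((ends e).1 ∈ Z) ((ends e).2 ∈ Z)) := by
    apply Finset.filter_congr; intro e _; rw [hYdef]; exact xor_compl ends Z e
  rw [hboth, hxor] at h1
  have hsplit := card_split ends (univ \ S : Finset E) Z
  have hsumd := Finset.sum_sdiff (f := d) (Finset.subset_univ Z)
  have hsumw : (∑ x ∈ univ \ Z, (w x : ℤ)) + ∑ x ∈ Z, (w x : ℤ) = ∑ x : V, (w x : ℤ) :=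
    Finset.sum_sdiff (f := fun v => (w v : ℤ)) (Finset.subset_univ Z)
  rw [← hYdef] at hsumd hsumw
  have hYcard : Y.card = Fintype.card V - Z.card := by
    rw [hYdef, Finset.card_sdiff_of_subset (Finset.subset_univ Z), Finset.card_univ]
  have hZcard : Z.card ≤ Fintype.card V := by
    rw [← Finset.card_univ]; exact Finset.card_le_card (Finset.subset_univ Z)
  have hdi := deg_identity ends w d S hdeg
  rw [hYcard] at h1
  omega

lemma numCompOn_eq_one {F : Finset E} {q : V}
    (hconn : ∀ v, (spanGraph ends F).Reachable q v) : numCompOn ends F = 1 := by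
  rw [numCompOn, Nat.card_eq_one_iff_unique]
  refine ⟨⟨?_⟩, ⟨SimpleGraph.connectedComponentMk _ q⟩⟩
  intro a b
  refine SimpleGraph.ConnectedComponent.ind₂ (fun v u => ?_) a b
  exact SimpleGraph.ConnectedComponent.sound ((hconn v).symm.trans (hconn u))

lemma reachable_of_numCompOn_one {F : Finset E} (h1 : numCompOn ends F = 1) (u v : V) :
    (spanGraph ends F).Reachable u v := by
  rw [numCompOn, Nat.card_eq_one_iff_unique] at h1
  have := h1.1
  exact (SimpleGraph.ConnectedComponent.eq).mp (Subsingleton.elim _ _)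

end Aux2
section Back
set_option linter.unusedSectionVars false
variable (ends : E → V × V) (w : V → ℕ) (d : V → ℤ) (S : Finset E)

lemma break_to_intstable
    (hdeg : (∑ v, d v) + S.card = genusOf ends w univ ∅)
    (hbd : IsBreakDivisorOn ends w (univ \ S) d) :
    ∀ Y : Finset V, Y.Nonempty → Y ≠ univ →
      (∑ v ∈ Y, d v) < genusOf ends w Y S + (((cutEdges ends Y) \ S).card : ℤ) := by
  obtain ⟨T, hTE, hTc, hTcard, φ, hφ, hdφ⟩ := hbd
  -- degree computation gives `T.card = |V| - 1` and connectivity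
  have hfibAll : ((univ \ S) \ T).card
      = ∑ v : V, (((univ \ S) \ T).filter fun e => φ e = v).card :=
    Finset.card_eq_sum_card_fiberwise (fun e _ => Finset.mem_univ (φ e))
  have hsumdall : ∑ v, d v = (∑ v, (w v : ℤ)) + (((univ \ S) \ T).card : ℤ) := by
    rw [Finset.sum_congr rfl fun v _ => hdφ v, Finset.sum_add_distrib]
    congr 1
    rw [hfibAll]
    push_cast
    rfl
  have hDcard : ((univ \ S) \ T).card = (univ \ S).card - T.card := Finset.card_sdiff_of_subset hTE
  have hTle : T.card ≤ (univ \ S).card := Finset.card_le_card hTE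
  have hdi := deg_identity ends w d S hdeg
  have hT1 : T.card + 1 = Fintype.card V := by omega
  have hone : numCompOn ends (univ \ S) = 1 := by omega
  have hTone : numCompOn ends T = 1 := hTc.trans hone
  intro Y hYne hYu
  obtain ⟨y, hy⟩ := hYne
  obtain ⟨q, hq⟩ : ∃ q, q ∉ Y := by
    by_contra hcon
    push_neg at hcon
    exact hYu (Finset.eq_univ_iff_forall.mpr hcon)
  have hyq : y ≠ q := fun hcon => hq (hcon ▸ hy)
  set step : V → V → Prop := fun u v => ∃ e ∈ T, ends e = (u, v) ∨ ends e = (v, u) with hstep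
  have hreach : ∀ v : V, ∃ n, reachN step q n v := by
    intro v
    have hr := reachable_of_numCompOn_one ends hTone q v
    rw [SimpleGraph.reachable_iff_reflTransGen] at hr
    exact reachN_of_reflTransGen (by
      have hm := Relation.ReflTransGen.mono (r := (spanGraph ends T).Adj) (p := step)
        (by intro a b hab; exact hab.2)
      exact hm q v hr)
  have Hsel : ∀ v : {x : V // x ≠ q}, ∃ p : E × V,
      (p.1 ∈ T ∧ (ends p.1 = (p.2, v.1) ∨ ends p.1 = (v.1, p.2)))
        ∧ rankOf step q p.2 < rankOf step q v.1 := by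
    rintro ⟨v, hv⟩
    obtain ⟨u, hustep, -, hrank⟩ := step_of_ne (hreach v) hv
    obtain ⟨e, heT, hor⟩ := hustep
    exact ⟨(e, u), ⟨heT, by tauto⟩, hrank⟩
  choose pe hpe hrank using Hsel
  have hinj : ∀ a b : {x : V // x ≠ q}, (pe a).1 = (pe b).1 → a = b := by
    intro a b hab
    by_contra hne
    have hvne : a.1 ≠ b.1 := fun hcon => hne (Subtype.ext hcon)
    have hpa := (hpe a).2
    have hpb := (hpe b).2
    rw [← hab] at hpb
    have hra := hrank a
    have hrb := hrank b
    rcases hpa with h1 | h1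
    · rcases hpb with h2 | h2
      · have hcomb := h1.symm.trans h2
        rw [Prod.mk.injEq] at hcomb
        exact hvne hcomb.2
      · have hcomb := h1.symm.trans h2
        rw [Prod.mk.injEq] at hcomb
        obtain ⟨hc1, hc2⟩ := hcomb
        rw [hc1] at hra
        rw [← hc2] at hrb
        omega
    · rcases hpb with h2 | h2
      · have hcomb := h1.symm.trans h2
        rw [Prod.mk.injEq] at hcomb
        obtain ⟨hc1, hc2⟩ := hcomb
        rw [← hc1] at hrb
        rw [hc2] at hra
        omega
      · have hcomb := h1.symm.trans h2
        rw [Prod.mk.injEq] at hcomb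
        exact hvne hcomb.1
  have hTpos : 0 < T.card := by
    have h2 : 1 < Fintype.card V := Fintype.one_lt_card_iff.mpr ⟨y, q, hyq⟩
    omega
  obtain ⟨e₀, -⟩ := Finset.card_pos.mp hTpos
  have hTinc : Y.card ≤ (T.filter fun e => (ends e).1 ∈ Y ∨ (ends e).2 ∈ Y).card := by
    apply Finset.card_le_card_of_injOn (fun v => if h : v ≠ q then (pe ⟨v, h⟩).1 else e₀)
    · intro v hvY
      have hvq : v ≠ q := fun hcon => hq (hcon ▸ hvY)
      simp only [dif_pos hvq]
      rw [Finset.mem_coe, Finset.mem_filter]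
      refine ⟨(hpe ⟨v, hvq⟩).1, ?_⟩
      rcases (hpe ⟨v, hvq⟩).2 with h1 | h1 <;> rw [h1] <;> simp [Finset.mem_coe.mp hvY]
    · intro a haY b hbY hab
      have haq : a ≠ q := fun hcon => hq (hcon ▸ haY)
      have hbq : b ≠ q := fun hcon => hq (hcon ▸ hbY)
      simp only [dif_pos haq, dif_pos hbq] at hab
      exact congrArg Subtype.val (hinj ⟨a, haq⟩ ⟨b, hbq⟩ hab)
  have hsub : (((univ \ S) \ T).filter fun e => φ e ∈ Y)
      ⊆ ((univ \ S).filter fun e => (ends e).1 ∈ Y ∨ (ends e).2 ∈ Y)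
        \ (T.filter fun e => (ends e).1 ∈ Y ∨ (ends e).2 ∈ Y) := by
    intro e he
    rw [Finset.mem_filter, Finset.mem_sdiff] at he
    obtain ⟨⟨heE, heT⟩, hφY⟩ := he
    have hend := hφ e (by rw [Finset.mem_sdiff]; exact ⟨heE, heT⟩)
    rw [Finset.mem_sdiff, Finset.mem_filter, Finset.mem_filter]
    constructor
    · exact ⟨heE, by rcases hend with hh | hh <;> [left; right] <;> rwa [← hh]⟩
    · intro hcon
      exact heT hcon.1
  have hBsub : (T.filter fun e => (ends e).1 ∈ Y ∨ (ends e).2 ∈ Y)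
      ⊆ ((univ \ S).filter fun e => (ends e).1 ∈ Y ∨ (ends e).2 ∈ Y) :=
    Finset.filter_subset_filter _ hTE
  have hNle : (((univ \ S) \ T).filter fun e => φ e ∈ Y).card + Y.card
      ≤ ((univ \ S).filter fun e => (ends e).1 ∈ Y ∨ (ends e).2 ∈ Y).card := by
    have h1 := Finset.card_le_card hsub
    rw [Finset.card_sdiff_of_subset hBsub] at h1
    have h2 := Finset.card_le_card hBsub
    omega
  have hfib : (((univ \ S) \ T).filter fun e => φ e ∈ Y).card
      = ∑ v ∈ Y, (((univ \ S) \ T).filter fun e => φ e = v).card := by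
    rw [Finset.card_eq_sum_card_fiberwise (s := ((univ \ S) \ T).filter fun e => φ e ∈ Y) (f := φ) (t := Y)
      (fun e he => (Finset.mem_filter.mp he).2)]
    apply Finset.sum_congr rfl
    intro v hv
    rw [Finset.filter_filter]
    congr 1
    apply Finset.filter_congr
    intro e _
    constructor
    · tauto
    · intro hh
      exact ⟨hh ▸ hv, hh⟩
  have hsumY : ∑ v ∈ Y, d v
      = (∑ v ∈ Y, (w v : ℤ)) + ((((univ \ S) \ T).filter fun e => φ e ∈ Y).card : ℤ) := by
    rw [Finset.sum_congr rfl fun v hv => hdφ v, Finset.sum_add_distrib]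
    congr 1
    rw [hfib]
    push_cast
    rfl
  have hsplitY := card_filter_incident ends (univ \ S) Y
  rw [genusOf, edgesIn_sdiff, cutEdges_sdiff]
  omega

end Back
section Orient
set_option linter.unusedSectionVars false
set_option maxHeartbeats 1000000
variable (ends : E → V × V) (w : V → ℕ) (d : V → ℤ) (S : Finset E)

lemma exists_orientation
    (hdeg : (∑ v, d v) + S.card = genusOf ends w univ ∅)
    (hint : ∀ Y : Finset V, Y.Nonempty → Y ≠ univ →
      (∑ v ∈ Y, d v) < genusOf ends w Y S + (((cutEdges ends Y) \ S).card : ℤ))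
    (q : V) (hd0 : ∀ v, (w v : ℤ) ≤ d v)
    (c : V → ℕ)
    (hcv : ∀ v, (c v : ℤ) = d v - (w v : ℤ) + (if v = q then 0 else 1))
    (hsumc : ∑ v, (c v : ℤ) = ((univ \ S : Finset E).card : ℤ)) :
    ∃ o : E → V, (∀ e ∈ (univ \ S : Finset E), o e = (ends e).1 ∨ o e = (ends e).2) ∧
      ∀ v, ((((univ \ S : Finset E)).filter fun e => o e = v).card : ℤ) = c v := by
  classical
  set slot : V → Finset (V × ℕ) := fun v => ({v} : Finset V) ×ˢ Finset.range (c v) with hslot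
  have hslotmem : ∀ (p : V × ℕ) (v : V), p ∈ slot v ↔ p.1 = v ∧ p.2 < c v := by
    intro p v
    simp only [hslot, Finset.mem_product, Finset.mem_singleton, Finset.mem_range]
  have hslotcard : ∀ v, (slot v).card = c v := by
    intro v
    simp [hslot]
  set t : {e // e ∈ (univ \ S : Finset E)} → Finset (V × ℕ) :=
    fun e => slot (ends e.1).1 ∪ slot (ends e.1).2 with ht
  have hall : ∀ s : Finset {e // e ∈ (univ \ S : Finset E)}, s.card ≤ (s.biUnion t).card := by
    intro s
    rcases s.eq_empty_or_nonempty with hs | hs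
    · simp [hs]
    set Z : Finset V := s.image (fun e => (ends e.1).1) ∪ s.image (fun e => (ends e.1).2)
      with hZ
    have hZne : Z.Nonempty := by
      obtain ⟨e, hes⟩ := hs
      exact ⟨(ends e.1).1, by
        rw [hZ]
        exact Finset.mem_union_left _ (Finset.mem_image_of_mem _ hes)⟩
    have hbi : s.biUnion t = Z.biUnion slot := by
      ext p
      simp only [Finset.mem_biUnion, ht, Finset.mem_union, hZ, Finset.mem_image]
      constructor
      · rintro ⟨e, hes, hp | hp⟩
        · exact ⟨(ends e.1).1, Or.inl ⟨e, hes, rfl⟩, hp⟩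
        · exact ⟨(ends e.1).2, Or.inr ⟨e, hes, rfl⟩, hp⟩
      · rintro ⟨v, hv | hv, hp⟩ <;> obtain ⟨e, hes, rfl⟩ := hv
        · exact ⟨e, hes, Or.inl hp⟩
        · exact ⟨e, hes, Or.inr hp⟩
    have hdisj : ∀ x ∈ Z, ∀ y ∈ Z, x ≠ y → Disjoint (slot x) (slot y) := by
      intro x _ y _ hxy
      rw [Finset.disjoint_left]
      intro p hx hy
      rw [hslotmem] at hx hy
      exact hxy ((hx.1.symm).trans hy.1)
    have hcardbi : (Z.biUnion slot).card = ∑ v ∈ Z, c v := by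
      rw [Finset.card_biUnion hdisj]
      exact Finset.sum_congr rfl fun v _ => hslotcard v
    have hs_sub : s.card ≤ ((univ \ S : Finset E).filter
        fun e => (ends e).1 ∈ Z ∧ (ends e).2 ∈ Z).card := by
      apply Finset.card_le_card_of_injOn (fun e => e.1)
      · intro e hes
        rw [Finset.mem_coe, Finset.mem_filter]
        refine ⟨e.2, ?_, ?_⟩
        · rw [hZ]; exact Finset.mem_union_left _ (Finset.mem_image_of_mem _ hes)
        · rw [hZ]; exact Finset.mem_union_right _ (Finset.mem_image_of_mem _ hes)
      · exact fun a _ b _ hab => Subtype.ext hab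
    rw [hbi, hcardbi]
    have hcast : (∑ v ∈ Z, (c v : ℤ)) = ((∑ v ∈ Z, c v : ℕ) : ℤ) := by push_cast; rfl
    by_cases hZu : Z = univ
    · have h1 : ∑ v ∈ Z, (c v : ℤ) = ((univ \ S : Finset E).card : ℤ) := by
        rw [hZu]; exact hsumc
      have h2 : ((univ \ S : Finset E).filter
          fun e => (ends e).1 ∈ Z ∧ (ends e).2 ∈ Z).card ≤ (univ \ S : Finset E).card :=
        Finset.card_le_card (Finset.filter_subset _ _)
      omega
    · have h3 := lower_bound ends w d S hint hdeg hZne hZu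
      have h4 : ∑ v ∈ Z, (c v : ℤ)
          = (∑ v ∈ Z, d v) - (∑ v ∈ Z, (w v : ℤ)) + ∑ v ∈ Z, (if v = q then (0:ℤ) else 1) := by
        rw [Finset.sum_congr rfl fun v (_ : v ∈ Z) => hcv v, Finset.sum_add_distrib,
          Finset.sum_sub_distrib]
      have h5 : (Z.card : ℤ) - 1 ≤ ∑ v ∈ Z, (if v = q then (0:ℤ) else 1) := by
        have he1 : ∑ v ∈ Z, (if v = q then (0:ℤ) else 1)
            = ((Z.filter fun v => ¬ v = q).card : ℤ) := by
          rw [Finset.sum_ite]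
          simp
        have he2 : (Z.filter fun v => ¬ v = q) = Z.erase q := by
          rw [← Finset.filter_ne']
        have he3 : Z.card - 1 ≤ (Z.erase q).card := Finset.pred_card_le_card_erase
        have he4 : (Z.erase q).card ≤ Z.card := Finset.card_le_card (Finset.erase_subset _ _)
        rw [he1, he2]
        omega
      omega
  obtain ⟨f, hfinj, hft⟩ := (Finset.all_card_le_biUnion_card_iff_exists_injective t).mp hall
  refine ⟨fun e => if h : e ∈ (univ \ S : Finset E) then (f ⟨e, h⟩).1 else (ends e).1, ?_, ?_⟩
  · intro e he
    simp only [dif_pos he]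
    have hm := hft ⟨e, he⟩
    rw [ht] at hm
    rw [Finset.mem_union, hslotmem, hslotmem] at hm
    rcases hm with hm | hm
    · exact Or.inl hm.1
    · exact Or.inr hm.1
  · -- exact indegrees
    set o : E → V := fun e => if h : e ∈ (univ \ S : Finset E) then (f ⟨e, h⟩).1 else (ends e).1
      with ho
    have hindegle : ∀ v, (((univ \ S : Finset E)).filter fun e => o e = v).card ≤ c v := by
      intro v
      have := Finset.card_le_card_of_injOn
        (f := fun e => if h : e ∈ (univ \ S : Finset E) then f ⟨e, h⟩ else ((ends e).1, 0))
        (s := ((univ \ S : Finset E)).filter fun e => o e = v) (t := slot v) ?_ ?_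
      · rw [hslotcard] at this; exact this
      · intro e hee
        rw [Finset.mem_coe, Finset.mem_filter] at hee
        obtain ⟨heE, hoev⟩ := hee
        simp only [dif_pos heE]
        rw [ho] at hoev
        simp only [dif_pos heE] at hoev
        have hm := hft ⟨e, heE⟩
        rw [ht, Finset.mem_union, hslotmem, hslotmem] at hm
        rw [Finset.mem_coe, hslotmem]
        rcases hm with hm | hm
        · exact ⟨hoev, by rw [← hoev, hm.1]; exact hm.2⟩
        · exact ⟨hoev, by rw [← hoev, hm.1]; exact hm.2⟩
      · intro a ha b hb hab
        rw [Finset.mem_coe, Finset.mem_filter] at ha hb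
        simp only [dif_pos ha.1, dif_pos hb.1] at hab
        exact congrArg Subtype.val (hfinj hab)
    have hsumindeg : ∑ v, (((univ \ S : Finset E)).filter fun e => o e = v).card
        = (univ \ S : Finset E).card :=
      (Finset.card_eq_sum_card_fiberwise (f := o) (t := univ) fun e _ => Finset.mem_univ _).symm
    have hsumcN : ∑ v, c v = (univ \ S : Finset E).card := by
      have h := hsumc
      rw [show (∑ v, (c v : ℤ)) = ((∑ v, c v : ℕ) : ℤ) by push_cast; rfl] at h
      exact_mod_cast h
    have hkey := (Finset.sum_eq_sum_iff_of_le
      (s := (univ : Finset V))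
      (f := fun v => (((univ \ S : Finset E)).filter fun e => o e = v).card)
      (g := c) fun i _ => hindegle i).mp (by rw [hsumindeg, hsumcN])
    intro v
    exact_mod_cast congrArg (Nat.cast : ℕ → ℤ) (hkey v (Finset.mem_univ v))
end Orient
section Forward
set_option linter.unusedSectionVars false
set_option maxHeartbeats 1000000
variable (ends : E → V × V) (w : V → ℕ) (d : V → ℤ) (S : Finset E)

lemma intstable_to_break (hne : Nonempty V)
    (hdeg : (∑ v, d v) + S.card = genusOf ends w univ ∅)
    (hint : ∀ Y : Finset V, Y.Nonempty → Y ≠ univ →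
      (∑ v ∈ Y, d v) < genusOf ends w Y S + (((cutEdges ends Y) \ S).card : ℤ)) :
    IsBreakDivisorOn ends w (univ \ S) d := by
  classical
  obtain ⟨q⟩ := hne
  have hdi := deg_identity ends w d S hdeg
  -- nonnegativity of d - w
  have hd0 : ∀ v, (w v : ℤ) ≤ d v := by
    intro v
    by_cases hu : ({v} : Finset V) = univ
    · have h1 : ∑ x, d x = d v := by rw [← hu, Finset.sum_singleton]
      have h2 : ∑ x, (w x : ℤ) = (w v : ℤ) := by rw [← hu, Finset.sum_singleton]
      have h3 : Fintype.card V = 1 := by rw [← Finset.card_univ, ← hu, Finset.card_singleton]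
      omega
    · have h3 := lower_bound ends w d S hint hdeg ⟨v, Finset.mem_singleton_self v⟩ hu
      rw [Finset.sum_singleton, Finset.sum_singleton, Finset.card_singleton] at h3
      omega
  set c : V → ℕ := fun v => (d v - w v).toNat + (if v = q then 0 else 1) with hc
  have hcv : ∀ v, (c v : ℤ) = d v - (w v : ℤ) + (if v = q then 0 else 1) := by
    intro v
    have h0 : (0:ℤ) ≤ d v - w v := by have := hd0 v; omega
    by_cases hv : v = q
    · simp only [hc, if_pos hv]
      push_cast
      rw [Int.toNat_of_nonneg h0]
    · simp only [hc, if_neg hv]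
      push_cast
      rw [Int.toNat_of_nonneg h0]
  have hsumc : ∑ v, (c v : ℤ) = ((univ \ S : Finset E).card : ℤ) := by
    rw [Finset.sum_congr rfl fun v (_ : v ∈ univ) => hcv v, Finset.sum_add_distrib,
      Finset.sum_sub_distrib]
    have hite : ∑ v : V, (if v = q then (0:ℤ) else 1) = (Fintype.card V : ℤ) - 1 := by
      rw [Finset.sum_ite]
      simp
      rw [Finset.filter_ne', Finset.card_erase_of_mem (Finset.mem_univ q), Finset.card_univ]
      have : 0 < Fintype.card V := Fintype.card_pos_iff.mpr ⟨q⟩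
      push_cast
      omega
    rw [hite]
    omega
  obtain ⟨o, hoend, hindeg⟩ :=
    exists_orientation ends w d S hdeg hint q hd0 c hcv hsumc
  -- reachability from q along the orientation
  set step : V → V → Prop :=
    fun u v => ∃ e ∈ (univ \ S : Finset E), o e = v ∧ (ends e = (u, v) ∨ ends e = (v, u))
    with hstep
  have hreach : ∀ v, ∃ n, reachN step q n v := by
    by_contra hcon
    push_neg at hcon
    obtain ⟨v0, hv0⟩ := hcon
    set Z : Finset V := univ.filter (fun v => ¬ ∃ n, reachN step q n v) with hZ
    have hmemZ : ∀ v, v ∈ Z ↔ ¬ ∃ n, reachN step q n v := by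
      intro v; simp [hZ]
    have hZne : Z.Nonempty := ⟨v0, (hmemZ v0).mpr (not_exists.mpr hv0)⟩
    have hqZ : q ∉ Z := by
      rw [hmemZ]
      intro hcon2
      exact hcon2 ⟨0, rfl⟩
    have hZu : Z ≠ univ := fun hcon2 => hqZ (hcon2 ▸ Finset.mem_univ q)
    have hkey : ((univ \ S : Finset E).filter fun e => o e ∈ Z)
        ⊆ ((univ \ S : Finset E).filter fun e => (ends e).1 ∈ Z ∧ (ends e).2 ∈ Z) := by
      intro e he
      rw [Finset.mem_filter] at he ⊢
      obtain ⟨heE, heoZ⟩ := he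
      have hoZ := (hmemZ (o e)).mp heoZ
      refine ⟨heE, ?_, ?_⟩
      · by_contra h1
        rcases hoend e heE with hob | hob
        · exact h1 (hob ▸ heoZ)
        · rw [hmemZ, not_not] at h1
          obtain ⟨n, hn⟩ := h1
          apply hoZ
          exact ⟨n + 1, (ends e).1, hn, e, heE, rfl, Or.inl (by rw [hob])⟩
      · by_contra h1
        rcases hoend e heE with hob | hob
        · rw [hmemZ, not_not] at h1
          obtain ⟨n, hn⟩ := h1
          apply hoZ
          exact ⟨n + 1, (ends e).2, hn, e, heE, rfl, Or.inr (by rw [hob])⟩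
        · exact h1 (hob ▸ heoZ)
    have hfibZ : ((univ \ S : Finset E).filter fun e => o e ∈ Z).card
        = ∑ v ∈ Z, ((univ \ S : Finset E).filter fun e => o e = v).card := by
      rw [Finset.card_eq_sum_card_fiberwise (s := (univ \ S : Finset E).filter fun e => o e ∈ Z) (f := o) (t := Z)
        (fun e he => (Finset.mem_filter.mp he).2)]
      apply Finset.sum_congr rfl
      intro v hv
      rw [Finset.filter_filter]
      congr 1
      apply Finset.filter_congr
      intro e _
      constructor
      · tauto
      · intro hh; exact ⟨hh ▸ hv, hh⟩
    have hsumZ : ∑ v ∈ Z, (((univ \ S : Finset E).filter fun e => o e = v).card : ℤ)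
        = (∑ v ∈ Z, d v) - (∑ v ∈ Z, (w v : ℤ)) + Z.card := by
      rw [Finset.sum_congr rfl fun v (_ : v ∈ Z) => hindeg v]
      rw [Finset.sum_congr rfl fun v (_ : v ∈ Z) => hcv v, Finset.sum_add_distrib,
        Finset.sum_sub_distrib]
      have : ∑ v ∈ Z, (if v = q then (0:ℤ) else 1) = (Z.card : ℤ) := by
        rw [Finset.sum_congr rfl (g := fun _ => (1:ℤ))
          (fun v hv => if_neg (fun hcon2 : v = q => hqZ (by rwa [hcon2] at hv)))]
        simp
      rw [this]
    have hcardle := Finset.card_le_card hkey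
    have h3 := lower_bound ends w d S hint hdeg hZne hZu
    have hcast : ∑ v ∈ Z, (((univ \ S : Finset E).filter fun e => o e = v).card : ℤ)
        = ((∑ v ∈ Z, ((univ \ S : Finset E).filter fun e => o e = v).card : ℕ) : ℤ) := by
      push_cast; rfl
    omega
  -- build the spanning tree
  have Hsel : ∀ v : {x : V // x ≠ q}, ∃ p : E × V,
      (p.1 ∈ (univ \ S : Finset E) ∧ o p.1 = v.1
        ∧ (ends p.1 = (p.2, v.1) ∨ ends p.1 = (v.1, p.2)))
      ∧ rankOf step q p.2 < rankOf step q v.1 := by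
    rintro ⟨v, hv⟩
    obtain ⟨u, hustep, -, hrank⟩ := step_of_ne (hreach v) hv
    obtain ⟨e, heE, hoev, hor⟩ := hustep
    exact ⟨(e, u), ⟨heE, hoev, by tauto⟩, hrank⟩
  choose pe hpe hrank using Hsel
  set T : Finset E := Finset.image (fun v => (pe v).1) Finset.univ with hT
  have hmemT : ∀ e, e ∈ T ↔ ∃ v : {x : V // x ≠ q}, (pe v).1 = e := by
    intro e
    simp [hT]
  have hTE : T ⊆ (univ \ S : Finset E) := by
    intro e he
    obtain ⟨v, hv⟩ := (hmemT e).mp he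
    exact hv ▸ (hpe v).1
  have hinjpe : Function.Injective fun v : {x : V // x ≠ q} => (pe v).1 := by
    intro a b hab
    have hab' : (pe a).1 = (pe b).1 := hab
    apply Subtype.ext
    have ha := (hpe a).2.1
    have hb := (hpe b).2.1
    rw [hab'] at ha
    rw [← ha, ← hb]
  have hTcard : T.card = Fintype.card V - 1 := by
    rw [hT, Finset.card_image_of_injective _ hinjpe, Finset.card_univ, Fintype.card_subtype]
    rw [Finset.filter_ne', Finset.card_erase_of_mem (Finset.mem_univ q), Finset.card_univ]
  -- heads of tree edges
  have hTfilter : ∀ v : V, (T.filter fun e => o e = v).card = if v = q then 0 else 1 := by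
    intro v
    by_cases hv : v = q
    · rw [if_pos hv]
      rw [Finset.card_eq_zero, Finset.filter_eq_empty_iff]
      intro e he
      obtain ⟨u, hu⟩ := (hmemT e).mp he
      rw [← hu, (hpe u).2.1, hv]
      exact u.2
    · rw [if_neg hv]
      have : (T.filter fun e => o e = v) = {(pe ⟨v, hv⟩).1} := by
        ext e
        rw [Finset.mem_filter, Finset.mem_singleton]
        constructor
        · rintro ⟨heT, hoe⟩
          obtain ⟨u, hu⟩ := (hmemT e).mp heT
          have : u = ⟨v, hv⟩ := Subtype.ext (show u.1 = v by
            rw [← hoe, ← hu]; exact ((hpe u).2.1).symm)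
          rw [← hu, this]
        · rintro rfl
          exact ⟨(hmemT _).mpr ⟨⟨v, hv⟩, rfl⟩, (hpe ⟨v, hv⟩).2.1⟩
      rw [this, Finset.card_singleton]
  -- connectivity
  have hreachT : ∀ v, (spanGraph ends T).Reachable q v := by
    have key : ∀ n, ∀ v, rankOf step q v ≤ n → (spanGraph ends T).Reachable q v := by
      intro n
      induction n with
      | zero =>
        intro v hv
        have h0 := reach_rankOf (hreach v)
        rw [Nat.le_zero.mp hv] at h0
        rw [h0]
      | succ n ih =>
        intro v hv
        by_cases hvq : v = q
        · rw [hvq]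
        · have h1 : rankOf step q (pe ⟨v, hvq⟩).2 < rankOf step q v := hrank ⟨v, hvq⟩
          have h2 := ih (pe ⟨v, hvq⟩).2 (by omega)
          apply h2.trans
          apply SimpleGraph.Adj.reachable
          refine ⟨?_, (pe ⟨v, hvq⟩).1, (hmemT _).mpr ⟨⟨v, hvq⟩, rfl⟩, ?_⟩
          · intro hcon
            rw [hcon] at h1
            exact absurd h1 (lt_irrefl _)
          · exact (hpe ⟨v, hvq⟩).2.2
    exact fun v => key (rankOf step q v) v le_rfl
  have honeT : numCompOn ends T = 1 := numCompOn_eq_one ends hreachT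
  have honeE : numCompOn ends (univ \ S) = 1 := by
    apply numCompOn_eq_one ends (q := q)
    intro v
    refine (hreachT v).mono (fun a b hab => ?_)
    obtain ⟨hne2, e, heT, hor⟩ := hab
    exact ⟨hne2, e, hTE heT, hor⟩
  have hVpos : 0 < Fintype.card V := Fintype.card_pos_iff.mpr ⟨q⟩
  refine ⟨T, hTE, by rw [honeT, honeE], by rw [honeE]; omega, o, ?_, ?_⟩
  · intro e he
    exact hoend e (Finset.mem_sdiff.mp he).1
  · intro v
    have hsplitv : (((univ \ S : Finset E) \ T).filter fun e => o e = v).card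
        + (T.filter fun e => o e = v).card
        = ((univ \ S : Finset E).filter fun e => o e = v).card := by
      have hu : ((univ \ S : Finset E).filter fun e => o e = v)
          = (((univ \ S : Finset E) \ T).filter fun e => o e = v)
            ∪ (T.filter fun e => o e = v) := by
        ext e
        simp only [Finset.mem_filter, Finset.mem_sdiff, Finset.mem_union]
        have hTe := @hTE e
        rw [Finset.mem_sdiff] at hTe
        tauto
      rw [hu, Finset.card_union_of_disjoint]
      rw [Finset.disjoint_left]
      intro e he1 he2
      rw [Finset.mem_filter, Finset.mem_sdiff] at he1
      exact he1.1.2 (Finset.mem_filter.mp he2).1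
    have h1 := hindeg v
    have h2 := hTfilter v
    have h3 := hcv v
    by_cases hvq : v = q
    · rw [if_pos hvq] at h2
      rw [if_pos hvq] at h3
      omega
    · rw [if_neg hvq] at h2
      rw [if_neg hvq] at h3
      omega
end Forward
/-- Lemma 5.9.  For `deg d + |S| = g`, the pair `(S, d)` is polystable
(equivalently, stable, since in degree `g` semistable = stable) with respect to any
positive polarization `h` if and only if `d` is a break divisor on `G - S`. -/
theorem stmt6 (ends : E → V × V) (w : V → ℕ) (d : V → ℤ) (h : V → ℤ)
    (hpos : ∀ v, 0 < h v) (S : Finset E)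
    (hdeg : (∑ v, d v) + S.card = genusOf ends w univ ∅) :
    Stable ends w h S d ↔ IsBreakDivisorOn ends w (univ \ S) d := by
  have hVne : Nonempty V := by
    by_contra hcon
    have hV : IsEmpty V := not_nonempty_iff.mp hcon
    have hE : IsEmpty E := ⟨fun e => hV.elim (ends e).1⟩
    have hS : S = ∅ := Finset.eq_empty_of_isEmpty S
    have hcV : Fintype.card V = 0 := Fintype.card_eq_zero
    have hcE : Fintype.card E = 0 := Fintype.card_eq_zero
    have hsum : (∑ v, d v) = 0 := by
      rw [Finset.univ_eq_empty, Finset.sum_empty]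
    have hsumw : (∑ v, (w v : ℤ)) = 0 := by
      rw [Finset.univ_eq_empty, Finset.sum_empty]
    rw [genus_univ, hsum, hsumw, hS, hcV, hcE] at hdeg
    simp at hdeg
  rw [stable_iff_int ends w d h S hpos hdeg]
  constructor
  · exact intstable_to_break ends w d S hVne hdeg
  · exact break_to_intstable ends w d S hdeg
end
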